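/- arXiv:1005.2216 — 4 statements merged into one kernel-verified Lean document; each statement's English description precedes it below -/
import Mathlib

section
/- A partial permutation π with k holes avoids the monotone pattern 12⋯ℓ if and only if the permutation π′ obtained from π by deleting all holes avoids the pattern 12⋯(ℓ−k). Consequently, the number of partial permutations of length n with k holes avoiding 12⋯ℓ equals binomial(n,k) times the number of permutations of length n−k avoiding 12⋯(ℓ−k). -/
open Finset

/-- The word `σ` contains the pattern `p`: there is a subsequence of `σ`
order-isomorphic to `p`. -/
def ContainsPat {n ℓ : ℕ} {α β : Type*} [LinearOrder α] [LinearOrder β]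
    (σ : Fin n → α) (p : Fin ℓ → β) : Prop :=
  ∃ g : Fin ℓ → Fin n, StrictMono g ∧ ∀ a b : Fin ℓ, σ (g a) < σ (g b) ↔ p a < p b

/-- `σ ∈ S_n` is an extension of the partial permutation `π`: on the non-hole
positions, the relative order of the values of `σ` matches that of `π`. -/
def IsExtension {n : ℕ} {α : Type*} [LinearOrder α]
    (σ : Equiv.Perm (Fin n)) (π : Fin n → Option α) : Prop :=
  ∀ i j : Fin n, ∀ vi vj : α, π i = some vi → π j = some vj → (σ i < σ j ↔ vi < vj)

/-- The partial permutation `π` avoids the pattern `p`: every extension avoids `p`. -/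
def PPAvoids {n ℓ : ℕ} {α β : Type*} [LinearOrder α] [LinearOrder β]
    (π : Fin n → Option α) (p : Fin ℓ → β) : Prop :=
  ∀ σ : Equiv.Perm (Fin n), IsExtension σ π → ¬ ContainsPat (⇑σ) p

/-- `π` is a partial permutation of length `n` with `k` holes: each value of
`{1,…,n-k}` appears exactly once and there are exactly `k` holes. -/
def IsPPerm {n : ℕ} (k : ℕ) (π : Fin n → Option (Fin (n - k))) : Prop :=
  (Finset.univ.filter fun i => π i = none).card = k ∧
    ∀ v : Fin (n - k), ∃! i : Fin n, π i = some v

/-- `π` is a partial permutation whose holes are exactly at the positions in `H`. -/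
def IsPPermH {n : ℕ} (H : Finset (Fin n)) (π : Fin n → Option (Fin (n - H.card))) : Prop :=
  (∀ i, π i = none ↔ i ∈ H) ∧ ∀ v : Fin (n - H.card), ∃! i : Fin n, π i = some v

/-- `s_n^k(p)`: the number of `p`-avoiding partial permutations of length `n`
with `k` holes. -/
noncomputable def snk (n k : ℕ) {ℓ : ℕ} (p : Fin ℓ → Fin ℓ) : ℕ :=
  Nat.card {π : Fin n → Option (Fin (n - k)) // IsPPerm k π ∧ PPAvoids π p}

/-- `s_n^H(p)`: the number of `p`-avoiding partial permutations of length `n`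
with hole set `H`. -/
noncomputable def snH {n ℓ : ℕ} (H : Finset (Fin n)) (p : Fin ℓ → Fin ℓ) : ℕ :=
  Nat.card {π : Fin n → Option (Fin (n - H.card)) // IsPPermH H π ∧ PPAvoids π p}

/-- The number of permutations of length `m` avoiding the pattern `p`. -/
noncomputable def avoidCount (m : ℕ) {ℓ : ℕ} (p : Fin ℓ → Fin ℓ) : ℕ :=
  Nat.card {σ : Equiv.Perm (Fin m) // ¬ ContainsPat (⇑σ) p}

/-- `p` is a Baxter permutation: no indices `a < b < c = b+1 < d` such that
`(p a, p b, p c, p d)` is order-isomorphic to `2413` or `3142`. -/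
def IsBaxter {ℓ : ℕ} (p : Fin ℓ → Fin ℓ) : Prop :=
  ¬ ∃ a b c d : Fin ℓ, a < b ∧ (b : ℕ) + 1 = (c : ℕ) ∧ c < d ∧
    ((p c < p a ∧ p a < p d ∧ p d < p b) ∨ (p b < p d ∧ p d < p a ∧ p a < p c))



lemma exists_perm_of_inj {n : ℕ} (κ : Fin n → ℚ) (hκ : Function.Injective κ) :
    ∃ σ : Equiv.Perm (Fin n), ∀ i j, σ i < σ j ↔ κ i < κ j := by
  classical
  set s : Finset ℚ := Finset.univ.image κ with hs
  have hcard : s.card = n := by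
    rw [hs, Finset.card_image_of_injective _ hκ, Finset.card_univ, Fintype.card_fin]
  let e := s.orderIsoOfFin hcard
  let f : Fin n → Fin n := fun i => e.symm ⟨κ i, by simp [hs]⟩
  have hfinj : Function.Injective f := by
    intro i j hij
    have := e.symm.injective hij
    exact hκ (Subtype.mk_eq_mk.mp this)
  refine ⟨Equiv.ofBijective f (Finite.injective_iff_bijective.mp hfinj), ?_⟩
  intro i j
  show f i < f j ↔ _
  rw [OrderIso.lt_iff_lt e.symm, Subtype.mk_lt_mk]

-- Lemma A
lemma lemA {n k ℓ : ℕ} (hkℓ : k ≤ ℓ) (π : Fin n → Option (Fin (n - k)))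
    (hπ : IsPPerm k π) (σ : Equiv.Perm (Fin n)) (hext : IsExtension σ π)
    (hcont : ContainsPat (⇑σ) (id : Fin ℓ → Fin ℓ)) :
    ∃ (g : Fin (ℓ - k) → Fin n) (v : Fin (ℓ - k) → Fin (n - k)),
      StrictMono g ∧ StrictMono v ∧ ∀ a, π (g a) = some (v a) := by
  classical
  obtain ⟨g, hg, hiso⟩ := hcont
  set S : Finset (Fin ℓ) := Finset.univ.filter (fun a => (π (g a)).isSome) with hS
  have hSc : ℓ - k ≤ S.card := by
    have h1 : (Finset.univ.filter (fun a : Fin ℓ => π (g a) = none)).card ≤ k := by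
      calc (Finset.univ.filter (fun a : Fin ℓ => π (g a) = none)).card
          ≤ (Finset.univ.filter fun i => π i = none).card := ?_
        _ = k := hπ.1
      apply Finset.card_le_card_of_injOn g
      · intro a ha
        simp only [Finset.coe_filter, Finset.mem_coe, Finset.mem_filter, Set.mem_setOf_eq, Finset.mem_univ, true_and] at ha ⊢
        exact ha
      · exact hg.injective.injOn
    have h2 : S.card + (Finset.univ.filter (fun a : Fin ℓ => π (g a) = none)).card = ℓ := by
      have : (Finset.univ.filter (fun a : Fin ℓ => π (g a) = none))
          = (Finset.univ.filter (fun a : Fin ℓ => ¬ (π (g a)).isSome)) := by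
        apply Finset.filter_congr
        intro a _
        cases h : π (g a) <;> simp [h]
      rw [hS, this, Finset.card_filter_add_card_filter_not, Finset.card_univ,
        Fintype.card_fin]
    omega
  set emb := S.orderEmbOfCardLe hSc
  have hmem : ∀ a, (π (g (emb a))).isSome := by
    intro a
    have := S.orderEmbOfCardLe_mem hSc a
    simpa [hS] using this
  refine ⟨fun a => g (emb a), fun a => (π (g (emb a))).get (hmem a), ?_, ?_, ?_⟩
  · exact hg.comp emb.strictMono
  · intro a b hab
    have hlt : σ (g (emb a)) < σ (g (emb b)) := by
      rw [hiso]
      simpa using emb.strictMono hab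
    have := hext _ _ _ _ (Option.some_get (hmem a)).symm (Option.some_get (hmem b)).symm
    exact this.mp hlt
  · intro a
    exact (Option.some_get (hmem a)).symm

-- Lemma B
lemma lemB {n k ℓ : ℕ} (hkℓ : k ≤ ℓ) (π : Fin n → Option (Fin (n - k)))
    (hπ : IsPPerm k π) (g : Fin (ℓ - k) → Fin n) (v : Fin (ℓ - k) → Fin (n - k))
    (hg : StrictMono g) (hv : StrictMono v) (hgv : ∀ a, π (g a) = some (v a)) :
    ∃ σ : Equiv.Perm (Fin n), IsExtension σ π ∧ ContainsPat (⇑σ) (id : Fin ℓ → Fin ℓ) := by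
  classical
  set S : Fin n → ℕ :=
    fun i => (Finset.univ.filter (fun a => g a < i)).sup (fun a => (v a : ℕ) + 1) with hSdef
  set frac : Fin n → ℚ := fun i => ((i : ℚ) + 1) / ((n : ℚ) + 2) with hfracdef
  have hn2 : (0:ℚ) < (n:ℚ) + 2 := by positivity
  have hfrac0 : ∀ i, 0 < frac i := by
    intro i; apply div_pos _ hn2; positivity
  have hfrac1 : ∀ i, frac i < 1 := by
    intro i
    rw [hfracdef, div_lt_one hn2]
    have : (i : ℚ) < (n : ℚ) := by exact_mod_cast i.2
    linarith
  have hfracmono : ∀ i j : Fin n, i < j → frac i < frac j := by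
    intro i j hij
    rw [hfracdef]
    rw [div_lt_div_iff_of_pos_right hn2]
    have : (i:ℚ) < (j:ℚ) := by exact_mod_cast hij
    linarith
  set κ : Fin n → ℚ :=
    fun i => (π i).elim ((S i : ℚ) - 1 + frac i) (fun w => (w : ℚ)) with hκdef
  have hκsome : ∀ i w, π i = some w → κ i = (w : ℚ) := by
    intro i w h; simp [hκdef, h]
  have hκnone : ∀ i, π i = none → κ i = (S i : ℚ) - 1 + frac i := by
    intro i h; simp [hκdef, h]
  -- monotonicity of S
  have hSmono : ∀ i j : Fin n, i ≤ j → S i ≤ S j := by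
    intro i j hij
    apply Finset.sup_mono
    intro a ha
    simp only [Finset.mem_filter, Finset.mem_univ, true_and] at ha ⊢
    exact lt_of_lt_of_le ha hij
  have hSge : ∀ (a) (i : Fin n), g a < i → (v a : ℕ) + 1 ≤ S i := by
    intro a i h
    exact Finset.le_sup (f := fun a => (v a : ℕ) + 1) (by simp [h])
  have hSle : ∀ (i : Fin n) (w : ℕ), (∀ a, g a < i → (v a : ℕ) + 1 ≤ w) → S i ≤ w := by
    intro i w h
    apply Finset.sup_le
    intro a ha
    simp only [Finset.mem_filter, Finset.mem_univ, true_and] at ha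
    exact h a ha
  -- the four ordering cases
  have holehole : ∀ i j : Fin n, π i = none → π j = none → i < j → κ i < κ j := by
    intro i j hi hj hij
    rw [hκnone i hi, hκnone j hj]
    have h1 : (S i : ℚ) ≤ (S j : ℚ) := by exact_mod_cast hSmono i j hij.le
    have := hfracmono i j hij
    linarith
  have thole : ∀ (a) (j : Fin n), π j = none → g a < j → κ (g a) < κ j := by
    intro a j hj hij
    rw [hκsome _ _ (hgv a), hκnone j hj]
    have h1 : ((v a : ℕ) : ℚ) + 1 ≤ (S j : ℚ) := by exact_mod_cast hSge a j hij
    have := hfrac0 j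
    push_cast at h1 ⊢
    linarith
  have holet : ∀ (i : Fin n) (b), π i = none → i < g b → κ i < κ (g b) := by
    intro i b hi hib
    rw [hκnone i hi, hκsome _ _ (hgv b)]
    have h1 : S i ≤ (v b : ℕ) := by
      apply hSle
      intro a ha
      have : a < b := hg.lt_iff_lt.mp (ha.trans hib)
      have := hv this
      omega
    have h1' : (S i : ℚ) ≤ ((v b : ℕ) : ℚ) := by exact_mod_cast h1
    have := hfrac1 i
    push_cast at h1' ⊢
    linarith
  have tt : ∀ a b, g a < g b → κ (g a) < κ (g b) := by
    intro a b hab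
    rw [hκsome _ _ (hgv a), hκsome _ _ (hgv b)]
    have : v a < v b := hv (hg.lt_iff_lt.mp hab)
    exact_mod_cast this
  -- non-integrality
  have noninteger : ∀ (i j : Fin n) (w : Fin (n-k)), π i = none → π j = some w → κ i ≠ κ j := by
    intro i j w hi hj heq
    rw [hκnone i hi, hκsome j w hj] at heq
    have hz : frac i = (((w : ℤ) - (S i : ℤ) + 1 : ℤ) : ℚ) := by push_cast; linarith
    have h0 := hfrac0 i
    have h1 := hfrac1 i
    rw [hz] at h0 h1
    have h0' : (0:ℤ) < (w : ℤ) - (S i : ℤ) + 1 := by exact_mod_cast h0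
    have h1' : (w : ℤ) - (S i : ℤ) + 1 < 1 := by exact_mod_cast h1
    omega
  -- injectivity
  have hκinj : Function.Injective κ := by
    intro i j heq
    by_contra hne
    rcases lt_trichotomy i j with h | h | h
    · cases hi : π i with
      | none =>
        cases hj : π j with
        | none => exact absurd heq (ne_of_lt (holehole i j hi hj h))
        | some w => exact noninteger i j w hi hj heq
      | some w =>
        cases hj : π j with
        | none => exact noninteger j i w hj hi heq.symm
        | some w' =>
          rw [hκsome i w hi, hκsome j w' hj] at heq
          have : w = w' := by
            have : (w:ℕ) = (w':ℕ) := by exact_mod_cast heq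
            exact Fin.ext this
          subst this
          exact hne ((hπ.2 w).unique hi hj)
    · exact hne h
    · cases hi : π i with
      | none =>
        cases hj : π j with
        | none => exact absurd heq.symm (ne_of_lt (holehole j i hj hi h))
        | some w => exact noninteger i j w hi hj heq
      | some w =>
        cases hj : π j with
        | none => exact noninteger j i w hj hi heq.symm
        | some w' =>
          rw [hκsome i w hi, hκsome j w' hj] at heq
          have : w = w' := by
            have : (w:ℕ) = (w':ℕ) := by exact_mod_cast heq
            exact Fin.ext this
          subst this
          exact hne ((hπ.2 w).unique hi hj)
  obtain ⟨σ, hσ⟩ := exists_perm_of_inj κ hκinj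
  refine ⟨σ, ?_, ?_⟩
  · intro i j vi vj hvi hvj
    rw [hσ, hκsome i vi hvi, hκsome j vj hvj]
    constructor
    · intro h'; exact_mod_cast h'
    · intro h'; exact_mod_cast h'
  · -- containment
    set U : Finset (Fin n) :=
      (Finset.univ.image g) ∪ (Finset.univ.filter (fun i => π i = none)) with hUdef
    have hdisj : Disjoint (Finset.univ.image g) (Finset.univ.filter (fun i => π i = none)) := by
      rw [Finset.disjoint_left]
      intro i hi hi'
      simp only [Finset.mem_image, Finset.mem_univ, true_and] at hi
      simp only [Finset.mem_filter, Finset.mem_univ, true_and] at hi'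
      obtain ⟨a, rfl⟩ := hi
      rw [hgv a] at hi'
      exact absurd hi' (by simp)
    have hUcard : U.card = ℓ := by
      rw [hUdef, Finset.card_union_of_disjoint hdisj,
        Finset.card_image_of_injective _ hg.injective, Finset.card_univ, Fintype.card_fin,
        hπ.1]
      omega
    have hUmono : ∀ i j, i ∈ U → j ∈ U → i < j → κ i < κ j := by
      intro i j hi hj hij
      rw [hUdef, Finset.mem_union] at hi hj
      rcases hi with hi | hi <;> rcases hj with hj | hj
      · simp only [Finset.mem_image, Finset.mem_univ, true_and] at hi hj
        obtain ⟨a, rfl⟩ := hi; obtain ⟨b, rfl⟩ := hj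
        exact tt a b hij
      · simp only [Finset.mem_image, Finset.mem_univ, true_and] at hi
        simp only [Finset.mem_filter, Finset.mem_univ, true_and] at hj
        obtain ⟨a, rfl⟩ := hi
        exact thole a j hj hij
      · simp only [Finset.mem_filter, Finset.mem_univ, true_and] at hi
        simp only [Finset.mem_image, Finset.mem_univ, true_and] at hj
        obtain ⟨b, rfl⟩ := hj
        exact holet i b hi hij
      · simp only [Finset.mem_filter, Finset.mem_univ, true_and] at hi hj
        exact holehole i j hi hj hij
    set G := U.orderEmbOfFin hUcard
    have hGmono : StrictMono (fun a => σ (G a)) := by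
      intro a b hab
      rw [hσ]
      exact hUmono _ _ (U.orderEmbOfFin_mem hUcard a) (U.orderEmbOfFin_mem hUcard b)
        (G.strictMono hab)
    exact ⟨fun a => G a, G.strictMono, fun a b => by
      simp only [id_eq]
      exact hGmono.lt_iff_lt⟩

def mkPP {n k : ℕ} (H : Finset (Fin n)) (hc : Hᶜ.card = n - k)
    (τ : Equiv.Perm (Fin (n - k))) : Fin n → Option (Fin (n - k)) :=
  fun i => if h : i ∈ H then none else
    some (τ ((Hᶜ.orderIsoOfFin hc).symm ⟨i, Finset.mem_compl.mpr h⟩))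

lemma mkPP_none_iff {n k : ℕ} (H : Finset (Fin n)) (hc : Hᶜ.card = n - k)
    (τ : Equiv.Perm (Fin (n - k))) (i : Fin n) : mkPP H hc τ i = none ↔ i ∈ H := by
  simp only [mkPP]
  split <;> simp_all

lemma mkPP_isPPerm {n k : ℕ} (H : Finset (Fin n)) (hH : H.card = k) (hc : Hᶜ.card = n - k)
    (τ : Equiv.Perm (Fin (n - k))) : IsPPerm k (mkPP H hc τ) := by
  classical
  set e := Hᶜ.orderIsoOfFin hc with he
  constructor
  · have h : (Finset.univ.filter fun i => mkPP H hc τ i = none) = H := by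
      ext i; simp [mkPP_none_iff]
    rw [h, hH]
  · intro v
    refine ⟨(e (τ.symm v) : Fin n), ?_, ?_⟩
    · have hmem : (e (τ.symm v) : Fin n) ∉ H := Finset.mem_compl.mp (e (τ.symm v)).2
      simp only [mkPP]
      rw [dif_neg hmem]
      congr 1
      have : (⟨(e (τ.symm v) : Fin n), Finset.mem_compl.mpr hmem⟩ : {x // x ∈ Hᶜ})
          = e (τ.symm v) := Subtype.ext rfl
      rw [this, e.symm_apply_apply, Equiv.apply_symm_apply]
    · intro i hi
      simp only [mkPP] at hi
      split at hi
      · exact absurd hi (by simp)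
      · rename_i h
        have h2 : τ (e.symm ⟨i, Finset.mem_compl.mpr h⟩) = v := Option.some_injective _ hi
        have h3 : e.symm ⟨i, Finset.mem_compl.mpr h⟩ = τ.symm v := by
          rw [← h2, Equiv.symm_apply_apply]
        have h4 : (⟨i, Finset.mem_compl.mpr h⟩ : {x // x ∈ Hᶜ}) = e (τ.symm v) := by
          rw [← h3, e.apply_symm_apply]
        exact congrArg Subtype.val h4

lemma mkPP_exists_iff {n k m : ℕ} (H : Finset (Fin n)) (hc : Hᶜ.card = n - k)
    (τ : Equiv.Perm (Fin (n - k))) :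
    (∃ (g : Fin m → Fin n) (v : Fin m → Fin (n - k)),
        StrictMono g ∧ StrictMono v ∧ ∀ a, mkPP H hc τ (g a) = some (v a)) ↔
      ContainsPat (⇑τ) (id : Fin m → Fin m) := by
  classical
  set e := Hᶜ.orderIsoOfFin hc with he
  constructor
  · rintro ⟨g, v, hg, hv, hgv⟩
    have hmem : ∀ a, g a ∉ H := by
      intro a h
      have := hgv a
      simp only [mkPP] at this
      rw [dif_pos h] at this
      exact absurd this (by simp)
    refine ⟨fun a => e.symm ⟨g a, Finset.mem_compl.mpr (hmem a)⟩, ?_, ?_⟩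
    · intro a b hab
      exact e.symm.strictMono (Subtype.mk_lt_mk.mpr (hg hab))
    · intro a b
      have hval : ∀ a, τ (e.symm ⟨g a, Finset.mem_compl.mpr (hmem a)⟩) = v a := by
        intro a
        have := hgv a
        simp only [mkPP] at this
        rw [dif_neg (hmem a)] at this
        exact Option.some_injective _ this
      rw [hval a, hval b]
      simp only [id_eq]
      exact hv.lt_iff_lt
  · rintro ⟨g, hg, hiso⟩
    refine ⟨fun a => (e (g a) : Fin n), fun a => τ (g a), ?_, ?_, ?_⟩
    · intro a b hab
      exact Subtype.mk_lt_mk.mp (by exact e.strictMono (hg hab))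
    · intro a b hab
      simp only [id_eq] at hiso
      exact (hiso a b).mpr hab
    · intro a
      have hmem : (e (g a) : Fin n) ∉ H := Finset.mem_compl.mp (e (g a)).2
      simp only [mkPP]
      rw [dif_neg hmem]
      congr 2
      have : (⟨(e (g a) : Fin n), Finset.mem_compl.mpr hmem⟩ : {x // x ∈ Hᶜ}) = e (g a) :=
        Subtype.ext rfl
      rw [this, e.symm_apply_apply]


lemma mkPP_apply {n k : ℕ} (H : Finset (Fin n)) (hc : Hᶜ.card = n - k)
    (τ : Equiv.Perm (Fin (n - k))) (j : Fin (n - k)) :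
    mkPP H hc τ ((Hᶜ.orderIsoOfFin hc) j : Fin n) = some (τ j) := by
  have hmem : ((Hᶜ.orderIsoOfFin hc) j : Fin n) ∉ H :=
    Finset.mem_compl.mp ((Hᶜ.orderIsoOfFin hc) j).2
  simp only [mkPP]
  rw [dif_neg hmem]
  congr 2
  have h : (⟨((Hᶜ.orderIsoOfFin hc) j : Fin n), Finset.mem_compl.mpr hmem⟩ : {x // x ∈ Hᶜ})
      = (Hᶜ.orderIsoOfFin hc) j := Subtype.ext rfl
  rw [h, (Hᶜ.orderIsoOfFin hc).symm_apply_apply]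

lemma compl_card {n k : ℕ} (H : Finset (Fin n)) (hH : H.card = k) : Hᶜ.card = n - k := by
  rw [Finset.card_compl, Fintype.card_fin, hH]

/-- A partial permutation with `k` holes avoids `12⋯ℓ` iff deleting all holes
yields a `12⋯(ℓ-k)`-avoiding permutation; consequently
`s_n^k(12⋯ℓ) = C(n,k) · s_{n-k}^0(12⋯(ℓ-k))`. -/
theorem monotone_pattern_avoidance (n k ℓ : ℕ) (hkℓ : k < ℓ) (hkn : k ≤ n) :
    (∀ π : Fin n → Option (Fin (n - k)), IsPPerm k π →
      (PPAvoids π (id : Fin ℓ → Fin ℓ) ↔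
        ¬ ∃ (g : Fin (ℓ - k) → Fin n) (v : Fin (ℓ - k) → Fin (n - k)),
            StrictMono g ∧ StrictMono v ∧ ∀ a, π (g a) = some (v a))) ∧
    snk n k (id : Fin ℓ → Fin ℓ)
      = n.choose k * avoidCount (n - k) (id : Fin (ℓ - k) → Fin (ℓ - k)) := by
  classical
  have part1 : ∀ π : Fin n → Option (Fin (n - k)), IsPPerm k π →
      (PPAvoids π (id : Fin ℓ → Fin ℓ) ↔
        ¬ ∃ (g : Fin (ℓ - k) → Fin n) (v : Fin (ℓ - k) → Fin (n - k)),
            StrictMono g ∧ StrictMono v ∧ ∀ a, π (g a) = some (v a)) := by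
    intro π hπ
    constructor
    · rintro hav ⟨g, v, hg, hv, hgv⟩
      obtain ⟨σ, hext, hcont⟩ := lemB hkℓ.le π hπ g v hg hv hgv
      exact hav σ hext hcont
    · intro h σ hext hcont
      exact h (lemA hkℓ.le π hπ σ hext hcont)
  refine ⟨part1, ?_⟩
  let B := ({H : Finset (Fin n) // H.card = k} ×
    {τ : Equiv.Perm (Fin (n - k)) // ¬ ContainsPat (⇑τ) (id : Fin (ℓ - k) → Fin (ℓ - k))})
  let Φ : B → {π : Fin n → Option (Fin (n - k)) //
      IsPPerm k π ∧ PPAvoids π (id : Fin ℓ → Fin ℓ)} :=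
    fun x => ⟨mkPP x.1.1 (compl_card x.1.1 x.1.2) x.2.1,
      mkPP_isPPerm x.1.1 x.1.2 _ x.2.1,
      (part1 _ (mkPP_isPPerm x.1.1 x.1.2 _ x.2.1)).mpr
        (by rw [mkPP_exists_iff]; exact x.2.2)⟩
  have hbij : Function.Bijective Φ := by
    constructor
    · rintro ⟨⟨H, hH⟩, ⟨τ, hτ⟩⟩ ⟨⟨H', hH'⟩, ⟨τ', hτ'⟩⟩ heq
      simp only [Φ, Subtype.mk.injEq] at heq
      have hHH : H = H' := by
        ext i
        rw [← mkPP_none_iff H (compl_card H hH) τ i, heq, mkPP_none_iff]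
      subst hHH
      have hττ : τ = τ' := by
        apply Equiv.ext
        intro j
        have h2 := congrFun heq ((Hᶜ.orderIsoOfFin (compl_card H hH)) j : Fin n)
        rw [mkPP_apply, mkPP_apply] at h2
        exact Option.some_injective _ h2
      subst hττ
      rfl
    · rintro ⟨π, hP, hAv⟩
      set H := Finset.univ.filter (fun i => π i = none) with hHdef
      have hH : H.card = k := hP.1
      have hc := compl_card H hH
      set e := Hᶜ.orderIsoOfFin hc with he
      have hsome : ∀ j : Fin (n - k), (π (e j : Fin n)).isSome := by
        intro j
        have hm : (e j : Fin n) ∉ H := Finset.mem_compl.mp (e j).2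
        have hm' : ¬ π (e j : Fin n) = none := by
          intro hnone
          exact hm (show (e j : Fin n) ∈ Finset.univ.filter (fun i => π i = none) by
            simp [hnone])
        exact Option.ne_none_iff_isSome.mp hm' 
      set τ₀ : Fin (n - k) → Fin (n - k) := fun j => (π (e j : Fin n)).get (hsome j) with hτ₀
      have hτinj : Function.Injective τ₀ := by
        intro j j' hjj
        have h1 : π (e j : Fin n) = some (τ₀ j) := (Option.some_get (hsome j)).symm
        have h2 : π (e j' : Fin n) = some (τ₀ j) := by
          rw [hjj]; exact (Option.some_get (hsome j')).symm
        have h3 := (hP.2 (τ₀ j)).unique h1 h2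
        exact e.injective (Subtype.coe_injective h3)
      let τ : Equiv.Perm (Fin (n - k)) :=
        Equiv.ofBijective τ₀ (Finite.injective_iff_bijective.mp hτinj)
      have hmk : mkPP H hc τ = π := by
        funext i
        by_cases h : i ∈ H
        · simp only [mkPP]
          rw [dif_pos h]
          have h2 : π i = none := by
            have h' : i ∈ Finset.univ.filter (fun i => π i = none) := h
            simpa using h' 
          exact h2.symm
        · simp only [mkPP]
          rw [dif_neg h]
          show some (τ₀ (e.symm ⟨i, Finset.mem_compl.mpr h⟩)) = π i
        
          rw [hτ₀]
          simp only []
          rw [Option.some_get]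
          congr 1
          exact congrArg Subtype.val (e.apply_symm_apply ⟨i, Finset.mem_compl.mpr h⟩)
      have hτav : ¬ ContainsPat (⇑τ) (id : Fin (ℓ - k) → Fin (ℓ - k)) := by
        rw [← mkPP_exists_iff H hc τ, hmk]
        exact (part1 π hP).mp hAv
      exact ⟨⟨⟨H, hH⟩, ⟨τ, hτav⟩⟩, Subtype.ext hmk⟩
  have hcard : Nat.card B = Nat.card {π : Fin n → Option (Fin (n - k)) //
      IsPPerm k π ∧ PPAvoids π (id : Fin ℓ → Fin ℓ)} :=
    Nat.card_eq_of_bijective Φ hbij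
  rw [snk, ← hcard]
  show Nat.card B = _
  rw [Nat.card_prod]
  congr 1
  · rw [Nat.card_eq_fintype_card, Fintype.card_finset_len, Fintype.card_fin]
end

section
/- Let p be a permutation of length ℓ, let k = ℓ−2, and let π be a partial permutation of length n whose holes are at positions h₁ < ⋯ < h_k. Partition the non-hole positions into intervals I₁,…,I_{k+1} where I_a is the set of non-hole positions between h_{a−1} and h_a (with I₁ before h₁ and I_{k+1} after h_k). Then π avoids p if and only if for all non-hole positions i < j with i ∈ I_a and j ∈ I_b, the entries satisfy π_i < π_j ⟺ p_a > p_{b+1}. -/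
open Finset

lemma orderIsoOfFin_lt_iff {α : Type*} [LinearOrder α] (S : Finset α) {c : ℕ}
    (hc : S.card = c) (x : α) (t : Fin c) :
    (S.orderIsoOfFin hc t : α) < x ↔ (t : ℕ) < (S.filter (· < x)).card := by
  classical
  set e := S.orderIsoOfFin hc with he
  set T : Finset (Fin c) := Finset.univ.filter (fun u => (e u : α) < x) with hT
  have hmemT : ∀ u : Fin c, u ∈ T ↔ (e u : α) < x := by
    intro u; simp [hT]
  have himg : S.filter (· < x) = T.image (fun u => (e u : α)) := by
    ext y
    simp only [mem_filter, mem_image]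
    constructor
    · rintro ⟨hy, hyx⟩
      exact ⟨e.symm ⟨y, hy⟩, by rw [hmemT]; simpa using hyx, by simp⟩
    · rintro ⟨u, hu, rfl⟩
      exact ⟨(e u).2, (hmemT u).mp hu⟩
  have hcardT : (S.filter (· < x)).card = T.card := by
    rw [himg, Finset.card_image_of_injective _ (fun u v huv => e.injective (Subtype.ext huv))]
  have hdc : ∀ u ∈ T, ∀ v : Fin c, v ≤ u → v ∈ T := by
    intro u hu v hv
    rw [hmemT] at hu ⊢
    exact lt_of_le_of_lt (by exact_mod_cast (e.monotone hv : e v ≤ e u)) hu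
  rw [hcardT, ← hmemT]
  constructor
  · intro h
    have hsub : Finset.Iic t ⊆ T := fun v hv => hdc t h v (Finset.mem_Iic.mp hv)
    have := Finset.card_le_card hsub
    rw [Fin.card_Iic] at this
    omega
  · intro h
    by_contra ht
    have hsub : T ⊆ Finset.Iio t := by
      intro u hu
      rw [Finset.mem_Iio]
      by_contra hut
      exact ht (hdc u hu t (not_lt.mp hut))
    have := Finset.card_le_card hsub
    rw [Fin.card_Iio] at this
    omega

/-- discrete IVT -/
lemma exists_step (G : ℕ → ℤ) : ∀ (m : ℕ), 0 ≤ G 0 → G m ≤ -1 →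
    (∀ r < m, G r - 1 ≤ G (r+1)) → ∃ r < m, G r = 0 ∧ G (r+1) = -1 := by
  intro m
  induction m with
  | zero => intro h0 hm _; omega
  | succ m ih =>
    intro h0 hm hstep
    by_cases hGm : G m ≤ -1
    · obtain ⟨r, hr, h⟩ := ih h0 hGm (fun r hr => hstep r (by omega))
      exact ⟨r, by omega, h⟩
    · push_neg at hGm
      have h1 := hstep m (by omega)
      refine ⟨m, by omega, by omega, by omega⟩

/-- permutation realizing the lexicographic order of `(f x, x)` -/
lemma exists_perm_of_key (n : ℕ) (f : Fin n → ℚ) :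
    ∃ σ : Equiv.Perm (Fin n), ∀ x y : Fin n,
      σ x < σ y ↔ (f x < f y ∨ (f x = f y ∧ x < y)) := by
  classical
  set key : Fin n → ℚ ×ₗ Fin n := fun x => toLex (f x, x) with hkey
  have hinj : Function.Injective key := by
    intro x y hxy
    have := congrArg (fun z => (ofLex z).2) hxy
    simpa [hkey] using this
  set S : Finset (ℚ ×ₗ Fin n) := Finset.univ.image key with hS
  have hcard : S.card = n := by
    rw [hS, Finset.card_image_of_injective _ hinj, Finset.card_univ, Fintype.card_fin]
  set e := S.orderIsoOfFin hcard with he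
  have hmem : ∀ x, key x ∈ S := fun x => Finset.mem_image_of_mem _ (Finset.mem_univ x)
  set τ : Fin n → Fin n := fun x => e.symm ⟨key x, hmem x⟩ with hτ
  have hτinj : Function.Injective τ := by
    intro x y hxy
    apply hinj
    have := congrArg (fun z => (e z : ℚ ×ₗ Fin n)) hxy
    simpa [hτ] using this
  refine ⟨Equiv.ofBijective τ (Finite.injective_iff_bijective.mp hτinj), ?_⟩
  intro x y
  have : τ x < τ y ↔ key x < key y := by
    simp only [hτ]
    rw [e.symm.lt_iff_lt, Subtype.mk_lt_mk]
  rw [Equiv.ofBijective_apply, Equiv.ofBijective_apply, this, hkey]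
  simp only [Prod.Lex.lt_iff, ofLex_toLex]

def iotaF (a b t : ℕ) : ℕ := if t < a then t else if t < b then t + 1 else t + 2

lemma iotaF_lt {k a b t : ℕ} (h : t < k) : iotaF a b t < k + 2 := by
  unfold iotaF; split
  · omega
  · split <;> omega

lemma filter_card_lt_of_mem {n : ℕ} (H : Finset (Fin n)) {x : Fin n} (hx : x ∈ H) :
    (H.filter (· < x)).card < H.card := by
  refine Finset.card_lt_card ⟨Finset.filter_subset _ _, fun hsub => ?_⟩
  have := hsub hx
  simp at this

def gfun (n k a b : ℕ) (ha : a ≤ k) (hb : b ≤ k) (hole : Fin k → Fin n) (i j : Fin n) :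
    Fin (k + 2) → Fin n := fun s =>
  if hs1 : (s : ℕ) < a then hole ⟨s, by omega⟩
  else if hs2 : (s : ℕ) = a then i
  else if hs3 : (s : ℕ) ≤ b then hole ⟨(s : ℕ) - 1, by omega⟩
  else if hs4 : (s : ℕ) = b + 1 then j
  else hole ⟨(s : ℕ) - 2, by have := s.isLt; omega⟩

section gfunLemmas
variable {n k a b : ℕ} {ha : a ≤ k} {hb : b ≤ k} {hole : Fin k → Fin n} {i j : Fin n}
  {s : Fin (k + 2)}

lemma gfun_lo (hs : (s : ℕ) < a) (h' : (s : ℕ) < k) :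
    gfun n k a b ha hb hole i j s = hole ⟨s, h'⟩ := by
  unfold gfun; rw [dif_pos hs]

lemma gfun_i (hs : (s : ℕ) = a) : gfun n k a b ha hb hole i j s = i := by
  unfold gfun; rw [dif_neg (by omega), dif_pos hs]

lemma gfun_mid (h1 : a < (s : ℕ)) (h2 : (s : ℕ) ≤ b) (h' : (s : ℕ) - 1 < k) :
    gfun n k a b ha hb hole i j s = hole ⟨(s : ℕ) - 1, h'⟩ := by
  unfold gfun; rw [dif_neg (by omega), dif_neg (by omega), dif_pos h2]

lemma gfun_j (h1 : (s : ℕ) = b + 1) (h2 : a ≤ b) : gfun n k a b ha hb hole i j s = j := by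
  unfold gfun; rw [dif_neg (by omega), dif_neg (by omega), dif_neg (by omega), dif_pos h1]

lemma gfun_hi (h1 : b + 1 < (s : ℕ)) (h2 : a ≤ b) (h' : (s : ℕ) - 2 < k) :
    gfun n k a b ha hb hole i j s = hole ⟨(s : ℕ) - 2, h'⟩ := by
  unfold gfun
  rw [dif_neg (by omega), dif_neg (by omega), dif_neg (by omega), dif_neg (by omega)]

lemma gfun_strictMono (hab : a ≤ b) (hmono : StrictMono hole)
    (hia : ∀ t : Fin k, hole t < i ↔ (t : ℕ) < a)
    (hjb : ∀ t : Fin k, hole t < j ↔ (t : ℕ) < b)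
    (hine : ∀ t, hole t ≠ i) (hjne : ∀ t, hole t ≠ j) (hij : i < j) :
    StrictMono (gfun n k a b ha hb hole i j) := by
  have hIlt : ∀ t : Fin k, a ≤ (t : ℕ) → i < hole t := by
    intro t ht
    refine lt_of_le_of_ne (not_lt.mp fun h => ?_) (fun h => hine t h.symm)
    exact absurd ((hia t).mp h) (by omega)
  have hJlt : ∀ t : Fin k, b ≤ (t : ℕ) → j < hole t := by
    intro t ht
    refine lt_of_le_of_ne (not_lt.mp fun h => ?_) (fun h => hjne t h.symm)
    exact absurd ((hjb t).mp h) (by omega)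
  rw [Fin.strictMono_iff_lt_succ]
  intro u
  have hu : (u : ℕ) < k + 1 := u.isLt
  have hcs : ((u.castSucc : Fin (k + 2)) : ℕ) = (u : ℕ) := rfl
  have hsc : ((u.succ : Fin (k + 2)) : ℕ) = (u : ℕ) + 1 := rfl
  set s : ℕ := (u : ℕ) with hsdef
  rcases lt_trichotomy s a with h1 | h1 | h1
  · -- g u.castSucc = hole ⟨s⟩
    rw [gfun_lo (s := u.castSucc) (by omega) (by omega)]
    rcases lt_or_eq_of_le (Nat.succ_le_of_lt h1) with h2 | h2
    · rw [gfun_lo (s := u.succ) (by rw [hsc]; omega) (by omega)]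
      exact hmono (by simp [Fin.lt_def])
    · rw [gfun_i (s := u.succ) (by rw [hsc]; omega)]
      exact (hia _).mpr (by simpa using h1)
  · -- g u.castSucc = i
    rw [gfun_i (s := u.castSucc) (by omega)]
    rcases lt_or_eq_of_le (show s + 1 ≤ b + 1 by omega) with h2 | h2
    · rw [gfun_mid (s := u.succ) (by omega) (by omega) (by omega)]
      exact hIlt _ (by simp; omega)
    · rw [gfun_j (s := u.succ) (by omega) hab]
      exact hij
  · rcases lt_trichotomy s (b + 1) with h2 | h2 | h2
    · -- a < s ≤ b : g = hole ⟨s-1⟩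
      rw [gfun_mid (s := u.castSucc) (by omega) (by omega) (by omega)]
      rcases lt_or_eq_of_le (Nat.succ_le_of_lt h2) with h3 | h3
      · rw [gfun_mid (s := u.succ) (by omega) (by omega) (by omega)]
        exact hmono (Fin.mk_lt_mk.mpr (by omega))
      · rw [gfun_j (s := u.succ) (by omega) hab]
        exact (hjb _).mpr (by simp; omega)
    · -- s = b+1 : g = j
      rw [gfun_j (s := u.castSucc) (by omega) hab]
      rw [gfun_hi (s := u.succ) (by omega) hab (by omega)]
      exact hJlt _ (by simp; omega)
    · -- s > b+1
      rw [gfun_hi (s := u.castSucc) (by omega) hab (by omega)]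
      rw [gfun_hi (s := u.succ) (by omega) hab (by omega)]
      exact hmono (by simp [Fin.lt_def]; omega)
end gfunLemmas


set_option maxHeartbeats 1600000 in
theorem dir1 (n k : ℕ) (p : Fin (k + 2) → Fin (k + 2))
    (hp : Function.Bijective p) (H : Finset (Fin n)) (hH : H.card = k)
    (π : Fin n → Option (Fin (n - k)))
    (hhole : ∀ i, π i = none ↔ i ∈ H)
    (hval : ∀ v : Fin (n - k), ∃! i : Fin n, π i = some v)
    (hav : PPAvoids π p) :
    ∀ i j : Fin n, ∀ vi vj : Fin (n - k), i < j →
        π i = some vi → π j = some vj →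
        (vi < vj ↔
          p ⟨(H.filter (· < j)).card + 1, (by
              have := Finset.card_filter_le H (· < j); omega : (H.filter (· < j)).card + 1 < k + 2 + 0)⟩
            < p ⟨(H.filter (· < i)).card, (by
              have := Finset.card_filter_le H (· < i); omega : (H.filter (· < i)).card < k + 2 + 0)⟩) := by
  classical
  intro i j vi vj hij hpi hpj
  by_contra hcon
  set a := (H.filter (· < i)).card with hadef
  set b := (H.filter (· < j)).card with hbdef
  have ha2 : a ≤ k := by
    have := Finset.card_filter_le H (· < i); omega
  have hb2 : b ≤ k := by
    have := Finset.card_filter_le H (· < j); omega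
  have hab : a ≤ b := by
    apply Finset.card_le_card
    intro x hx
    rw [Finset.mem_filter] at hx ⊢
    exact ⟨hx.1, lt_trans hx.2 hij⟩
  set a' : Fin (k + 2) := ⟨a, by omega⟩ with ha'
  set b1' : Fin (k + 2) := ⟨b + 1, by omega⟩ with hb1'
  have hcon' : ¬ (vi < vj ↔ p b1' < p a') := hcon
  -- basic distinctness
  have hvne : vi ≠ vj := by
    intro h
    obtain ⟨w, hw, hu⟩ := hval vi
    have h1 := hu i hpi
    have h2 := hu j (by rw [h]; exact hpj)
    rw [h1, h2] at hij
    exact lt_irrefl _ hij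
  have hpane : p a' ≠ p b1' := by
    intro h
    have := hp.injective h
    rw [ha', hb1', Fin.mk.injEq] at this
    omega
  have E : vi < vj ↔ p a' < p b1' := by
    by_cases hv : vi < vj
    · have h1 : ¬ p b1' < p a' := fun hh => hcon' (iff_of_true hv hh)
      exact iff_of_true hv (lt_of_le_of_ne (not_lt.mp h1) hpane)
    · have h1 : p b1' < p a' := by
        by_contra hh
        exact hcon' (iff_of_false hv hh)
      exact iff_of_false hv (not_lt.mpr h1.le)
  -- hole enumeration
  set hole : Fin k → Fin n := fun t => (H.orderIsoOfFin hH t : Fin n) with hholedef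
  have hmono : StrictMono hole := fun s t hst => by
    exact_mod_cast (H.orderIsoOfFin hH).strictMono hst
  have hiH : i ∉ H := by
    intro h
    rw [← hhole] at h
    rw [h] at hpi
    cases hpi
  have hjH : j ∉ H := by
    intro h
    rw [← hhole] at h
    rw [h] at hpj
    cases hpj
  have hia : ∀ t : Fin k, hole t < i ↔ (t : ℕ) < a := fun t =>
    orderIsoOfFin_lt_iff H hH i t
  have hjb : ∀ t : Fin k, hole t < j ↔ (t : ℕ) < b := fun t =>
    orderIsoOfFin_lt_iff H hH j t
  have hholeH : ∀ t : Fin k, hole t ∈ H := fun t => (H.orderIsoOfFin hH t).2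
  have hine : ∀ t : Fin k, hole t ≠ i := fun t h => hiH (h ▸ hholeH t)
  have hjne : ∀ t : Fin k, hole t ≠ j := fun t h => hjH (h ▸ hholeH t)
  have hidx : ∀ t : Fin k, (H.filter (· < hole t)).card = (t : ℕ) := by
    intro t
    have h1 : ∀ u : Fin k, ((u : ℕ) < (H.filter (· < hole t)).card ↔ (u : ℕ) < (t : ℕ)) := by
      intro u
      rw [← orderIsoOfFin_lt_iff H hH (hole t) u]
      constructor
      · intro h
        exact Fin.lt_def.mp (hmono.lt_iff_lt.mp h)
      · intro h
        exact hmono (Fin.lt_def.mpr h)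
    have h2 : (H.filter (· < hole t)).card < k := by
      rw [← hH]
      exact filter_card_lt_of_mem H (hholeH t)
    rcases lt_trichotomy ((H.filter (· < hole t)).card) (t : ℕ) with h | h | h
    · have := (h1 ⟨(H.filter (· < hole t)).card, h2⟩).mpr (by simpa using h)
      simp at this
    · exact h
    · have := (h1 t).mp h
      omega
  -- positions of the occurrence
  set g : Fin (k + 2) → Fin n := gfun n k a b ha2 hb2 hole i j with hgdef
  have hgmono : StrictMono g := gfun_strictMono hab hmono hia hjb hine hjne hij
  -- rational values
  set M : ℚ := (k : ℚ) + 2 with hM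
  have hM0 : (0 : ℚ) < M := by rw [hM]; positivity
  set viQ : ℚ := ((vi : ℕ) : ℚ) with hviQ
  set vjQ : ℚ := ((vj : ℕ) : ℚ) with hvjQ
  set paQ : ℚ := (((p a' : Fin (k + 2)) : ℕ) : ℚ) with hpaQ
  set pb1Q : ℚ := (((p b1' : Fin (k + 2)) : ℕ) : ℚ) with hpb1Q
  have hpaQne : paQ ≠ pb1Q := by
    rw [hpaQ, hpb1Q]
    intro h
    exact hpane (Fin.ext (by exact_mod_cast h))
  set c : ℚ := M * (vjQ - viQ) / (pb1Q - paQ) with hc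
  have hc0 : 0 < c := by
    rcases lt_or_ge vi vj with hv | hv
    · have h1 : p a' < p b1' := E.mp hv
      have h2 : viQ < vjQ := by
        rw [hviQ, hvjQ]
        exact_mod_cast Fin.lt_def.mp hv
      have h3 : paQ < pb1Q := by
        rw [hpaQ, hpb1Q]
        exact_mod_cast Fin.lt_def.mp h1
      exact div_pos (mul_pos hM0 (by linarith)) (by linarith)
    · have hv' : vj < vi := lt_of_le_of_ne hv (by exact fun h => hvne h.symm)
      have h1 : ¬ p a' < p b1' := fun hh => absurd (E.mpr hh) (not_lt.mpr hv)
      have h1' : p b1' < p a' := lt_of_le_of_ne (not_lt.mp h1) (Ne.symm hpane)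
      have h2 : vjQ < viQ := by
        rw [hviQ, hvjQ]
        exact_mod_cast Fin.lt_def.mp hv'
      have h3 : pb1Q < paQ := by
        rw [hpaQ, hpb1Q]
        exact_mod_cast Fin.lt_def.mp h1'
      rw [hc]
      apply div_pos_iff.mpr
      right
      constructor
      · have : vjQ - viQ < 0 := by linarith
        exact mul_neg_of_pos_of_neg hM0 this
      · linarith
  have hkey : (pb1Q - paQ) * c = M * (vjQ - viQ) := by
    have hne : pb1Q - paQ ≠ 0 := sub_ne_zero.mpr (Ne.symm hpaQne)
    rw [hc]
    field_simp
  -- pattern values as rationals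
  set pQ : ℕ → ℚ := fun u => if h : u < k + 2 then (((p ⟨u, h⟩ : Fin (k + 2)) : ℕ) : ℚ) else 0
    with hpQdef
  have hpQ : ∀ s : Fin (k + 2), pQ (s : ℕ) = (((p s : Fin (k + 2)) : ℕ) : ℚ) := by
    intro s
    simp only [hpQdef]
    rw [dif_pos s.isLt, Fin.eta]
  -- the function f
  set f : Fin n → ℚ := fun x =>
    if hx : π x = none then
      M * viQ + (pQ (iotaF a b ((H.filter (· < x)).card)) - paQ) * c + c / 2
    else M * ((((π x).get (Option.isSome_iff_ne_none.mpr hx) : Fin (n - k)) : ℕ) : ℚ)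
    with hfdef
  have hfval : ∀ (x : Fin n) (v : Fin (n - k)), π x = some v → f x = M * ((v : ℕ) : ℚ) := by
    intro x v hxv
    simp only [hfdef]
    rw [dif_neg (by simp [hxv])]
    simp only [hxv, Option.get_some]
  have hfhole : ∀ t : Fin k,
      f (hole t) = M * viQ + (pQ (iotaF a b (t : ℕ)) - paQ) * c + c / 2 := by
    intro t
    have hnone : π (hole t) = none := (hhole _).mpr (hholeH t)
    simp only [hfdef]
    rw [dif_pos hnone, hidx t]
  -- f values along g
  have hfg : ∀ s : Fin (k + 2),
      f (g s) = M * viQ + ((((p s : Fin (k + 2)) : ℕ) : ℚ) - paQ) * c ∨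
      f (g s) = M * viQ + ((((p s : Fin (k + 2)) : ℕ) : ℚ) - paQ) * c + c / 2 := by
    intro s
    by_cases hs1 : (s : ℕ) < a
    · right
      rw [hgdef, gfun_lo hs1 (by omega), hfhole]
      have : iotaF a b ((⟨(s : ℕ), by omega⟩ : Fin k) : ℕ) = (s : ℕ) := by
        show iotaF a b (s : ℕ) = (s : ℕ)
        unfold iotaF
        split_ifs <;> omega
      rw [this, hpQ s]
    · by_cases hs2 : (s : ℕ) = a
      · left
        rw [hgdef, gfun_i hs2, hfval i vi hpi]
        have hsa : s = a' := Fin.ext (by rw [hs2])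
        rw [hsa]
        rw [← hpaQ]
        ring
      · by_cases hs3 : (s : ℕ) ≤ b
        · right
          rw [hgdef, gfun_mid (by omega) hs3 (by omega), hfhole]
          have : iotaF a b ((⟨(s : ℕ) - 1, by omega⟩ : Fin k) : ℕ) = (s : ℕ) := by
            show iotaF a b ((s : ℕ) - 1) = (s : ℕ)
            unfold iotaF
            split_ifs <;> omega
          rw [this, hpQ s]
        · by_cases hs4 : (s : ℕ) = b + 1
          · left
            rw [hgdef, gfun_j hs4 hab, hfval j vj hpj]
            have hsb : s = b1' := Fin.ext (by rw [hs4])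
            rw [hsb, ← hpb1Q]
            have : M * viQ + (pb1Q - paQ) * c = M * vjQ := by
              rw [hkey]; ring
            rw [this]
          · right
            rw [hgdef, gfun_hi (by omega) hab (by have := s.isLt; omega), hfhole]
            have : iotaF a b ((⟨(s : ℕ) - 2, by have := s.isLt; omega⟩ : Fin k) : ℕ)
                = (s : ℕ) := by
              show iotaF a b ((s : ℕ) - 2) = (s : ℕ)
              have := s.isLt
              unfold iotaF
              split_ifs <;> omega
            rw [this, hpQ s]
  -- strict comparison of f along g
  have hfgmono : ∀ s t : Fin (k + 2), p s < p t → f (g s) < f (g t) := by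
    intro s t hst
    have h1 : (((p s : Fin (k + 2)) : ℕ) : ℚ) + 1 ≤ (((p t : Fin (k + 2)) : ℕ) : ℚ) := by
      exact_mod_cast Nat.succ_le_of_lt (Fin.lt_def.mp hst)
    have h2 : c ≤ ((((p t : Fin (k + 2)) : ℕ) : ℚ) - (((p s : Fin (k + 2)) : ℕ) : ℚ)) * c := by
      nlinarith
    rcases hfg s with hs | hs <;> rcases hfg t with ht | ht <;> rw [hs, ht] <;> nlinarith
  -- build the permutation
  obtain ⟨σ, hσ⟩ := exists_perm_of_key n f
  have hext : IsExtension σ π := by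
    intro x y vx vy hx hy
    rw [hσ, hfval x vx hx, hfval y vy hy]
    constructor
    · rintro (h | ⟨heq, hlt⟩)
      · have : ((vx : ℕ) : ℚ) < ((vy : ℕ) : ℚ) := lt_of_mul_lt_mul_left h hM0.le
        rw [Fin.lt_def]
        exact_mod_cast this
      · exfalso
        have hvv : vx = vy := by
          have : ((vx : ℕ) : ℚ) = ((vy : ℕ) : ℚ) := mul_left_cancel₀ (ne_of_gt hM0) heq
          exact Fin.ext (by exact_mod_cast this)
        obtain ⟨w, hw, hu⟩ := hval vx
        have h1 := hu x hx
        have h2 := hu y (by rw [hvv]; exact hy)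
        rw [h1, h2] at hlt
        exact lt_irrefl _ hlt
    · intro h
      left
      have : ((vx : ℕ) : ℚ) < ((vy : ℕ) : ℚ) := by exact_mod_cast Fin.lt_def.mp h
      exact mul_lt_mul_of_pos_left this hM0
  have hocc : ContainsPat (⇑σ) p := by
    refine ⟨g, hgmono, fun s t => ?_⟩
    rw [hσ]
    constructor
    · rintro (h | ⟨heq, hlt⟩)
      · by_contra hn
        rcases (not_lt.mp hn).lt_or_eq with h2 | h2
        · exact absurd (hfgmono t s h2) (not_lt.mpr h.le)
        · have : t = s := hp.injective h2
          rw [this] at h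
          exact lt_irrefl _ h
      · by_contra hn
        rcases (not_lt.mp hn).lt_or_eq with h2 | h2
        · exact absurd (hfgmono t s h2) (not_lt.mpr heq.le)
        · have : t = s := hp.injective h2
          rw [this] at hlt
          exact lt_irrefl _ hlt
    · intro h
      exact Or.inl (hfgmono s t h)
  exact hav σ hext hocc

set_option maxHeartbeats 1600000 in
theorem dir2 (n k : ℕ) (p : Fin (k + 2) → Fin (k + 2))
    (hp : Function.Bijective p) (H : Finset (Fin n)) (hH : H.card = k)
    (π : Fin n → Option (Fin (n - k)))
    (hhole : ∀ i, π i = none ↔ i ∈ H)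
    (hC : ∀ i j : Fin n, ∀ vi vj : Fin (n - k), i < j →
        π i = some vi → π j = some vj →
        (vi < vj ↔
          p ⟨(H.filter (· < j)).card + 1, (by
              have := Finset.card_filter_le H (· < j); omega : (H.filter (· < j)).card + 1 < k + 2 + 0)⟩
            < p ⟨(H.filter (· < i)).card, (by
              have := Finset.card_filter_le H (· < i); omega : (H.filter (· < i)).card < k + 2 + 0)⟩)) :
    PPAvoids π p := by
  classical
  rintro σ hext ⟨g, hg, hiso⟩
  set N : Finset (Fin (k + 2)) := Finset.univ.filter (fun s => ¬ π (g s) = none) with hN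
  have hmemN : ∀ s, s ∈ N ↔ ¬ π (g s) = none := by intro s; simp [hN]
  have hole_of_not : ∀ s, s ∉ N → g s ∈ H := by
    intro s hs
    rw [hmemN] at hs
    push_neg at hs
    exact (hhole _).mp hs
  have hm2 : 2 ≤ N.card := by
    have hle : (Finset.univ.filter (fun s => π (g s) = none)).card ≤ H.card := by
      refine Finset.card_le_card_of_injOn g (fun s hs => ?_) ?_
      · simp only [Finset.mem_coe, Finset.mem_filter, Finset.mem_univ, true_and] at hs
        exact (hhole _).mp hs
      · exact fun x _ y _ hxy => hg.injective hxy
    have := Finset.card_filter_add_card_filter_not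
      (s := (Finset.univ : Finset (Fin (k + 2)))) (fun s => π (g s) = none)
    simp only [Finset.card_univ, Fintype.card_fin] at this
    have hNc : N.card = (Finset.univ.filter (fun s => ¬ π (g s) = none)).card := rfl
    omega
  set m := N.card with hmdef
  set eN := N.orderIsoOfFin rfl with heN
  set sf : Fin m → Fin (k + 2) := fun r => (eN r : Fin (k + 2)) with hsf
  have hsfmono : StrictMono sf := fun r r' hr => by
    exact_mod_cast eN.strictMono hr
  have hsfN : ∀ r, sf r ∈ N := fun r => (eN r).2
  have hnotN : ∀ (u : Fin (k + 2)) (hu : u ∈ N), ∀ r : Fin m,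
      (u < sf r → (eN.symm ⟨u, hu⟩ : Fin m) < r) ∧
      (sf r < u → r < (eN.symm ⟨u, hu⟩ : Fin m)) := by
    intro u hu r
    have heq : sf (eN.symm ⟨u, hu⟩) = u := by
      simp only [hsf]
      rw [eN.apply_symm_apply]
    constructor
    · intro hur
      rw [← heq] at hur
      exact hsfmono.lt_iff_lt.mp hur
    · intro hur
      rw [← heq] at hur
      exact hsfmono.lt_iff_lt.mp hur
  have hbelow : ∀ (hr : 0 < m) (u : Fin (k + 2)), u < sf ⟨0, hr⟩ → u ∉ N := by
    intro hr u hu hmem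
    have := (hnotN u hmem ⟨0, hr⟩).1 hu
    simp [Fin.lt_def] at this
  have habove : ∀ (hr : m - 1 < m) (u : Fin (k + 2)), sf ⟨m - 1, hr⟩ < u → u ∉ N := by
    intro hr u hu hmem
    have := (hnotN u hmem ⟨m - 1, hr⟩).2 hu
    have h2 := (eN.symm ⟨u, hmem⟩).isLt
    simp [Fin.lt_def] at this
    omega
  have hbetween : ∀ (r : ℕ) (hr : r + 1 < m) (hr' : r < m) (u : Fin (k + 2)),
      sf ⟨r, hr'⟩ < u → u < sf ⟨r + 1, hr⟩ → u ∉ N := by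
    intro r hr hr' u h1 h2 hmem
    have ha := (hnotN u hmem ⟨r, hr'⟩).2 h1
    have hb := (hnotN u hmem ⟨r + 1, hr⟩).1 h2
    simp [Fin.lt_def] at ha hb
    omega
  -- F1
  have hF1 : ∀ (hr : 0 < m),
      ((sf ⟨0, hr⟩ : Fin (k + 2)) : ℕ) ≤ (H.filter (· < g (sf ⟨0, hr⟩))).card := by
    intro hr
    rw [← Fin.card_Iio (sf ⟨0, hr⟩)]
    refine Finset.card_le_card_of_injOn g (fun u hu => ?_)
      (fun x _ y _ hxy => hg.injective hxy)
    rw [Finset.mem_coe, Finset.mem_Iio] at hu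
    rw [Finset.mem_coe, Finset.mem_filter]
    exact ⟨hole_of_not u (hbelow hr u hu), hg hu⟩
  -- F2
  have hF2 : ∀ (hr : m - 1 < m),
      (H.filter (· < g (sf ⟨m - 1, hr⟩))).card + (k + 1 - ((sf ⟨m - 1, hr⟩ : Fin (k + 2)) : ℕ)) ≤ k := by
    intro hr
    set sl := sf ⟨m - 1, hr⟩ with hsl
    have hdisj : Disjoint (H.filter (· < g sl)) ((Finset.Ioi sl).image g) := by
      rw [Finset.disjoint_left]
      intro x hx hx2
      rw [Finset.mem_filter] at hx
      rw [Finset.mem_image] at hx2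
      obtain ⟨u, hu, rfl⟩ := hx2
      rw [Finset.mem_Ioi] at hu
      exact absurd (hg hu) (not_lt.mpr hx.2.le)
    have hsub : (H.filter (· < g sl)) ∪ ((Finset.Ioi sl).image g) ⊆ H := by
      intro x hx
      rw [Finset.mem_union] at hx
      rcases hx with hx | hx
      · exact (Finset.mem_filter.mp hx).1
      · rw [Finset.mem_image] at hx
        obtain ⟨u, hu, rfl⟩ := hx
        rw [Finset.mem_Ioi] at hu
        exact hole_of_not u (habove hr u hu)
    have hcards := Finset.card_le_card hsub
    rw [Finset.card_union_of_disjoint hdisj, hH,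
      Finset.card_image_of_injective _ hg.injective, Fin.card_Ioi] at hcards
    omega
  -- F3
  have hF3 : ∀ (r : ℕ) (hr : r + 1 < m) (hr' : r < m),
      (H.filter (· < g (sf ⟨r, hr'⟩))).card
        + (((sf ⟨r + 1, hr⟩ : Fin (k + 2)) : ℕ) - ((sf ⟨r, hr'⟩ : Fin (k + 2)) : ℕ) - 1)
        ≤ (H.filter (· < g (sf ⟨r + 1, hr⟩))).card := by
    intro r hr hr'
    set s1 := sf ⟨r, hr'⟩ with hs1
    set s2 := sf ⟨r + 1, hr⟩ with hs2
    have hdisj : Disjoint (H.filter (· < g s1)) ((Finset.Ioo s1 s2).image g) := by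
      rw [Finset.disjoint_left]
      intro x hx hx2
      rw [Finset.mem_filter] at hx
      rw [Finset.mem_image] at hx2
      obtain ⟨u, hu, rfl⟩ := hx2
      rw [Finset.mem_Ioo] at hu
      exact absurd (hg hu.1) (not_lt.mpr hx.2.le)
    have hs12 : s1 < s2 := hsfmono (by simp [Fin.lt_def])
    have hsub : (H.filter (· < g s1)) ∪ ((Finset.Ioo s1 s2).image g)
        ⊆ H.filter (· < g s2) := by
      intro x hx
      rw [Finset.mem_union] at hx
      rw [Finset.mem_filter]
      rcases hx with hx | hx
      · rw [Finset.mem_filter] at hx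
        exact ⟨hx.1, lt_trans hx.2 (hg hs12)⟩
      · rw [Finset.mem_image] at hx
        obtain ⟨u, hu, rfl⟩ := hx
        rw [Finset.mem_Ioo] at hu
        exact ⟨hole_of_not u (hbetween r hr hr' u hu.1 hu.2), hg hu.2⟩
    have hcards := Finset.card_le_card hsub
    rw [Finset.card_union_of_disjoint hdisj,
      Finset.card_image_of_injective _ hg.injective, Fin.card_Ioo] at hcards
    rw [Fin.lt_def] at hs12
    omega
  -- discrete IVT
  set G : ℕ → ℤ := fun r => if hr : r < m then
    (((H.filter (· < g (sf ⟨r, hr⟩))).card : ℤ) - ((sf ⟨r, hr⟩ : Fin (k + 2)) : ℕ)) else 0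
    with hG
  have hm0 : (0:ℕ) < m := by omega
  have hmm : m - 1 < m := by omega
  have hG0 : 0 ≤ G 0 := by
    simp only [hG]
    rw [dif_pos hm0]
    have := hF1 hm0
    omega
  have hGm : G (m - 1) ≤ -1 := by
    simp only [hG]
    rw [dif_pos hmm]
    have := hF2 hmm
    have hlt := (sf ⟨m - 1, hmm⟩).isLt
    omega
  have hGstep : ∀ r < m - 1, G r - 1 ≤ G (r + 1) := by
    intro r hr
    have hp1 : r < m := by omega
    have hp2 : r + 1 < m := by omega
    simp only [hG]
    rw [dif_pos hp1, dif_pos hp2]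
    have h3 := hF3 r hp2 hp1
    have hlt : sf ⟨r, hp1⟩ < sf ⟨r + 1, hp2⟩ :=
      hsfmono (by simp [Fin.lt_def])
    rw [Fin.lt_def] at hlt
    omega
  obtain ⟨r, hrm, hGr0, hGr1⟩ := exists_step G (m - 1) hG0 hGm hGstep
  have hrm' : r < m := by omega
  have hr1m : r + 1 < m := by omega
  simp only [hG] at hGr0 hGr1
  rw [dif_pos hrm'] at hGr0
  rw [dif_pos hr1m] at hGr1
  have hst : sf ⟨r, hrm'⟩ < sf ⟨r + 1, hr1m⟩ := hsfmono (by simp [Fin.lt_def])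
  have hAs : (H.filter (· < g (sf ⟨r, hrm'⟩))).card = ((sf ⟨r, hrm'⟩ : Fin (k + 2)) : ℕ) := by
    omega
  have hAt : (H.filter (· < g (sf ⟨r + 1, hr1m⟩))).card + 1
      = ((sf ⟨r + 1, hr1m⟩ : Fin (k + 2)) : ℕ) := by
    omega
  set s := sf ⟨r, hrm'⟩ with hs
  set t := sf ⟨r + 1, hr1m⟩ with ht
  -- extract values
  have hsN : ¬ π (g s) = none := (hmemN s).mp (hsfN ⟨r, hrm'⟩)
  have htN : ¬ π (g t) = none := (hmemN t).mp (hsfN ⟨r + 1, hr1m⟩)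
  obtain ⟨vs, hvs⟩ := Option.ne_none_iff_exists'.mp hsN
  obtain ⟨vt, hvt⟩ := Option.ne_none_iff_exists'.mp htN
  have hcc := hC (g s) (g t) vs vt (hg hst) hvs hvt
  simp only [hAt, hAs, Fin.eta] at hcc
  have e1 := hext (g s) (g t) vs vt hvs hvt
  have e2 := hiso s t
  have hne : p s ≠ p t := fun h => absurd (hp.injective h) (ne_of_lt hst)
  rcases lt_trichotomy (p s) (p t) with h | h | h
  · exact absurd (hcc.mp (e1.mp (e2.mpr h))) (lt_asymm h)
  · exact hne h
  · exact absurd (e2.mp (e1.mpr (hcc.mpr h))) (lt_asymm h)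

/-- For a pattern of length `k+2` and a partial permutation with `k` holes,
`π` avoids `p` iff for all non-hole positions `i < j`, with `i` in the interval
`I_a` and `j` in the interval `I_b` (here `a`, `b` are 1-indexed; 0-indexed they
are the numbers of holes preceding `i` resp. `j`),
the relative order of `π_i, π_j` differs from that of `p_a, p_{b+1}`. -/
theorem avoid_iff_order_condition (n k : ℕ) (p : Fin (k + 2) → Fin (k + 2))
    (hp : Function.Bijective p) (H : Finset (Fin n)) (hH : H.card = k)
    (π : Fin n → Option (Fin (n - k)))
    (hhole : ∀ i, π i = none ↔ i ∈ H)
    (hval : ∀ v : Fin (n - k), ∃! i : Fin n, π i = some v) :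
    PPAvoids π p ↔
      ∀ i j : Fin n, ∀ vi vj : Fin (n - k), i < j →
        π i = some vi → π j = some vj →
        (vi < vj ↔
          p ⟨(H.filter (· < j)).card + 1, by
              have := Finset.card_filter_le H (· < j); omega⟩
            < p ⟨(H.filter (· < i)).card, by
              have := Finset.card_filter_le H (· < i); omega⟩) := by
  constructor
  · intro hav
    exact dir1 n k p hp H hH π hhole hval hav
  · intro hC
    exact dir2 n k p hp H hH π hhole hC
end

section
/- Let p be a permutation of length ℓ = k+2, n an integer, and H ⊆ {1,...,n} a set of k hole positions. Then the number of p-avoiding partial permutations with hole set H is at most 1. -/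
open Finset

lemma exists_rank_perm {n : ℕ} {γ : Type*} [LinearOrder γ] (f : Fin n → γ)
    (hf : Function.Injective f) :
    ∃ σ : Equiv.Perm (Fin n), ∀ i j, σ i < σ j ↔ f i < f j := by
  have hlt : ∀ i : Fin n, (univ.filter fun m => f m < f i).card < n := by
    intro i
    have hsub : (univ.filter fun m => f m < f i) ⊆ univ.erase i := by
      intro m hm
      simp only [mem_filter, mem_univ, true_and] at hm
      exact Finset.mem_erase.2 ⟨fun h => absurd (h ▸ hm) (lt_irrefl _), mem_univ _⟩
    calc (univ.filter fun m => f m < f i).card ≤ (univ.erase i).card :=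
          Finset.card_le_card hsub
      _ < univ.card := Finset.card_erase_lt_of_mem (mem_univ i)
      _ = n := Finset.card_fin n
  set g : Fin n → Fin n := fun i => ⟨_, hlt i⟩ with hg
  have hmono : ∀ i j, f i < f j → g i < g j := by
    intro i j hij
    have hsub : (univ.filter fun m => f m < f i) ⊂ (univ.filter fun m => f m < f j) := by
      refine Finset.ssubset_iff_of_subset ?_ |>.2 ?_
      · intro m hm
        simp only [mem_filter, mem_univ, true_and] at *
        exact hm.trans hij
      · exact ⟨i, by simp [hij], by simp⟩
    exact Finset.card_lt_card hsub
  have hinj : Function.Injective g := by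
    intro i j h
    by_contra hne
    have hne' : f i ≠ f j := fun he => hne (hf he)
    rcases hne'.lt_or_gt with h1 | h1
    · exact absurd h (ne_of_lt (hmono _ _ h1))
    · exact absurd h.symm (ne_of_lt (hmono _ _ h1))
  have hbij := (Finite.injective_iff_bijective).1 hinj
  refine ⟨Equiv.ofBijective g hbij, fun i j => ⟨fun h => ?_, hmono i j⟩⟩
  rcases lt_trichotomy (f i) (f j) with h1 | h1 | h1
  · exact h1
  · exact absurd (hf h1 ▸ h) (lt_irrefl _)
  · exact absurd h (not_lt.2 (le_of_lt (hmono _ _ h1)))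

lemma key_lemma {n k : ℕ} (p : Fin (k + 2) → Fin (k + 2)) (hp : Function.Injective p)
    (H : Finset (Fin n)) (hH : H.card = k)
    (π : Fin n → Option (Fin (n - H.card))) (hπ : IsPPermH H π) (hav : PPAvoids π p)
    {i j : Fin n} (hne : i ≠ j)
    {vi vj : Fin (n - H.card)} (hvi : π i = some vi) (hvj : π j = some vj)
    (g : Fin (k + 2) → Fin n) (hg : StrictMono g)
    {a0 b0 : Fin (k + 2)} (hga : g a0 = i) (hgb : g b0 = j)
    (hgH : ∀ a, a ≠ a0 → a ≠ b0 → g a ∈ H) :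
    ¬ (vi < vj ↔ p a0 < p b0) := by
  intro hiff
  have hginj : Function.Injective g := hg.injective
  have ha0b0 : a0 ≠ b0 := fun h => hne (by rw [← hga, ← hgb, h])
  have hvivj : vi ≠ vj := by
    intro h
    subst h
    exact hne ((hπ.2 vi).unique hvi hvj)
  have hpab : p a0 ≠ p b0 := fun h => ha0b0 (hp h)
  set u : ℚ := ((vi : ℕ) : ℚ) with hu
  set v : ℚ := ((vj : ℕ) : ℚ) with hv
  set t0 : ℚ := (((p a0) : ℕ) : ℚ) with ht0
  set d : ℚ := (((p b0) : ℕ) : ℚ) - t0 with hd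
  set c : ℚ := v - u with hc
  set s : ℚ := c / d with hsdef
  have hspos : 0 < s := by
    rcases hvivj.lt_or_gt with h1 | h1
    · have h2 : p a0 < p b0 := hiff.1 h1
      refine div_pos ?_ ?_
      · rw [hc, hu, hv, sub_pos, Nat.cast_lt]
        exact h1
      · rw [hd, ht0, sub_pos, Nat.cast_lt]
        exact h2
    · have h2 : ¬ p a0 < p b0 := fun hx => absurd (hiff.2 hx) (asymm h1)
      have h2' : p b0 < p a0 := (not_lt.1 h2).lt_of_ne hpab.symm
      refine div_pos_of_neg_of_neg ?_ ?_
      · rw [hc, hu, hv, sub_neg, Nat.cast_lt]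
        exact h1
      · rw [hd, ht0, sub_neg, Nat.cast_lt]
        exact h2'
  have hdne : d ≠ 0 := by
    intro h0
    rw [hsdef, h0, div_zero] at hspos
    exact lt_irrefl 0 hspos
  set hfun : Fin (k + 2) → ℚ := fun a => u + s * ((((p a) : ℕ) : ℚ) - t0) with hfun_def
  have hfa0 : hfun a0 = u := by
    simp [hfun_def, ht0]
  have hfb0 : hfun b0 = v := by
    have hsd : s * d = c := by rw [hsdef]; exact div_mul_cancel₀ c hdne
    have : hfun b0 = u + s * d := by rw [hfun_def, hd]
    rw [this, hsd, hc]
    ring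
  have hmono : ∀ a b, hfun a < hfun b ↔ p a < p b := by
    intro a b
    rw [hfun_def]
    simp only [add_lt_add_iff_left, mul_lt_mul_iff_right₀ hspos, sub_lt_sub_iff_right,
      Nat.cast_lt]
    exact Fin.lt_def.symm
  have hinjh : ∀ a b, hfun a = hfun b → a = b := by
    intro a b hab
    by_contra hneq
    have hpne : p a ≠ p b := fun h => hneq (hp h)
    rcases hpne.lt_or_gt with h1 | h1
    · exact absurd hab (ne_of_lt ((hmono a b).2 h1))
    · exact absurd hab.symm (ne_of_lt ((hmono b a).2 h1))
  have hcover : ∀ m ∈ H, ∃ a, g a = m := by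
    have hTsub : (univ \ {a0, b0}).image g ⊆ H := by
      intro m hm
      simp only [mem_image, mem_sdiff, mem_univ, true_and, mem_insert, mem_singleton] at hm
      obtain ⟨a, ha, rfl⟩ := hm
      push_neg at ha
      exact hgH a ha.1 ha.2
    have hTcard : ((univ \ {a0, b0}).image g).card = k := by
      rw [Finset.card_image_of_injective _ hginj, Finset.card_sdiff_of_subset (Finset.subset_univ _),
        Finset.card_univ, Fintype.card_fin,
        Finset.card_insert_of_notMem (by simp [ha0b0]), Finset.card_singleton]
      omega
    have hTeq : (univ \ {a0, b0}).image g = H :=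
      Finset.eq_of_subset_of_card_le hTsub (by rw [hTcard, hH])
    intro m hm
    rw [← hTeq] at hm
    obtain ⟨a, _, ha⟩ := Finset.mem_image.1 hm
    exact ⟨a, ha⟩
  choose slot hslot using hcover
  set f : Fin n → ℚ :=
    fun m => if hm : m ∈ H then hfun (slot m hm) else ((((π m).getD vi) : ℕ) : ℚ) with hfdef
  have hfval : ∀ m w, π m = some w → f m = ((w : ℕ) : ℚ) := by
    intro m w hw
    have hmH : m ∉ H := by
      intro h
      have := (hπ.1 m).2 h
      rw [hw] at this
      simp at this
    simp [hfdef, dif_neg hmH, hw]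
  have hfg : ∀ a, f (g a) = hfun a := by
    intro a
    by_cases h1 : a = a0
    · subst h1
      rw [hga, hfval i vi hvi, hfa0, hu]
    · by_cases h2 : a = b0
      · subst h2
        rw [hgb, hfval j vj hvj, hfb0, hv]
      · have hmem := hgH a h1 h2
        have hfeq : f (g a) = hfun (slot (g a) hmem) := by
          rw [hfdef]
          exact dif_pos hmem
        rw [hfeq]
        congr 1
        exact hginj (hslot (g a) hmem)
  set F : Fin n → ℚ ×ₗ Fin n := fun m => toLex (f m, m) with hF
  have hFinj : Function.Injective F := by
    intro a b hab
    exact congrArg (fun x => (ofLex x).2) hab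
  obtain ⟨σ, hσ⟩ := exists_rank_perm F hFinj
  have hσlt : ∀ a b, σ a < σ b ↔ (f a < f b ∨ (f a = f b ∧ a < b)) := by
    intro a b
    rw [hσ, hF]
    exact Prod.Lex.lt_iff
  have hext : IsExtension σ π := by
    intro m m' vm vm' hm hm'
    rw [hσlt, hfval m vm hm, hfval m' vm' hm']
    constructor
    · rintro (h1 | ⟨h1, h2⟩)
      · exact Fin.lt_def.2 (Nat.cast_lt.1 h1)
      · exfalso
        have hvv : vm = vm' := Fin.val_injective (Nat.cast_injective h1)
        subst hvv
        exact absurd ((hπ.2 vm).unique hm hm') (ne_of_lt h2)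
    · intro h1
      exact Or.inl (Nat.cast_lt.2 (Fin.lt_def.1 h1))
  have hcon : ContainsPat (⇑σ) p := by
    refine ⟨g, hg, fun a b => ?_⟩
    rw [hσlt, hfg a, hfg b]
    constructor
    · rintro (h1 | ⟨h1, h2⟩)
      · exact (hmono a b).1 h1
      · have : a = b := hinjh a b h1
        subst this
        exact absurd h2 (lt_irrefl _)
    · intro h1
      exact Or.inl ((hmono a b).2 h1)
  exact hav σ hext hcon

lemma val_eq_card {n : ℕ} (H : Finset (Fin n)) (π : Fin n → Option (Fin (n - H.card)))
    (hπ : IsPPermH H π) {vi : Fin (n - H.card)} :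
    (univ.filter fun m => ∃ w, π m = some w ∧ w < vi).card = (vi : ℕ) := by
  have hbij : (univ.filter fun m => ∃ w, π m = some w ∧ w < vi).card =
      (Finset.Iio vi).card := by
    refine Finset.card_bij (fun m _ => (π m).getD vi) ?_ ?_ ?_
    · intro m hm
      simp only [mem_filter, mem_univ, true_and] at hm
      obtain ⟨w, hw, hwlt⟩ := hm
      show (π m).getD vi ∈ Iio vi
      rw [hw]
      simpa using hwlt
    · intro a ha b hb hab
      simp only [mem_filter, mem_univ, true_and] at ha hb
      obtain ⟨wa, hwa, -⟩ := ha
      obtain ⟨wb, hwb, -⟩ := hb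
      have hab' : (π a).getD vi = (π b).getD vi := hab
      rw [hwa, hwb] at hab'
      simp only [Option.getD_some] at hab'
      subst hab'
      exact (hπ.2 wa).unique hwa hwb
    · intro w hw
      obtain ⟨m, hm, -⟩ := hπ.2 w
      refine ⟨m, ?_, ?_⟩
      · simp only [mem_filter, mem_univ, true_and]
        exact ⟨w, hm, Finset.mem_Iio.1 hw⟩
      · show (π m).getD vi = w
        rw [hm]
        simp
  rw [hbij, Fin.card_Iio]

/-- For a pattern of length `k+2` and a hole set of size `k`, there is at most
one avoiding partial permutation. -/
theorem at_most_one_avoider (n k : ℕ) (p : Fin (k + 2) → Fin (k + 2))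
    (hp : Function.Bijective p) (H : Finset (Fin n)) (hH : H.card = k) :
    snH H p ≤ 1 := by
  unfold snH
  have hsub : Subsingleton
      {π : Fin n → Option (Fin (n - H.card)) // IsPPermH H π ∧ PPAvoids π p} := by
    constructor
    rintro ⟨π, hπ, hav⟩ ⟨π', hπ', hav'⟩
    refine Subtype.ext ?_
    show π = π'
    -- comparison of relative orders for positions x < y
    have hcomp : ∀ x y : Fin n, ∀ vx vy vx' vy' : Fin (n - H.card), x < y →
        π x = some vx → π y = some vy → π' x = some vx' → π' y = some vy' →
        (vx < vy ↔ vx' < vy') := by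
      intro x y vx vy vx' vy' hxy hx hy hx' hy'
      have hxny : x ≠ y := ne_of_lt hxy
      have hxH : x ∉ H := by
        intro h
        have := (hπ.1 x).2 h
        rw [hx] at this
        simp at this
      have hyH : y ∉ H := by
        intro h
        have := (hπ.1 y).2 h
        rw [hy] at this
        simp at this
      set S : Finset (Fin n) := insert x (insert y H) with hS
      have hScard : S.card = k + 2 := by
        rw [hS, Finset.card_insert_of_notMem (by simp [hxH, hxny]),
          Finset.card_insert_of_notMem hyH, hH]
      set g : Fin (k + 2) → Fin n := ⇑(S.orderEmbOfFin hScard) with hg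
      have hgmono : StrictMono g := (S.orderEmbOfFin hScard).strictMono
      have hrange : ∀ m ∈ S, ∃ a, g a = m := by
        intro m hm
        have hm' : m ∈ (S : Set (Fin n)) := hm
        rw [← Finset.range_orderEmbOfFin S hScard] at hm'
        obtain ⟨a, ha⟩ := hm'
        exact ⟨a, ha⟩
      obtain ⟨a0, ha0⟩ := hrange x (by simp [hS])
      obtain ⟨b0, hb0⟩ := hrange y (by simp [hS])
      have hgH : ∀ a, a ≠ a0 → a ≠ b0 → g a ∈ H := by
        intro a h1 h2
        have hmem : g a ∈ S := Finset.orderEmbOfFin_mem S hScard a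
        rw [hS] at hmem
        rcases Finset.mem_insert.1 hmem with h | h
        · exact absurd (hgmono.injective (h.trans ha0.symm)) h1
        · rcases Finset.mem_insert.1 h with h' | h'
          · exact absurd (hgmono.injective (h'.trans hb0.symm)) h2
          · exact h'
      have k1 := key_lemma p hp.injective H hH π hπ hav hxny hx hy g hgmono ha0 hb0 hgH
      have k2 := key_lemma p hp.injective H hH π' hπ' hav' hxny hx' hy' g hgmono ha0 hb0 hgH
      tauto
    -- the full order comparison
    have hord : ∀ x y : Fin n, ∀ vx vy vx' vy' : Fin (n - H.card),
        π x = some vx → π y = some vy → π' x = some vx' → π' y = some vy' →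
        (vx < vy ↔ vx' < vy') := by
      intro x y vx vy vx' vy' hx hy hx' hy'
      rcases lt_trichotomy x y with h | h | h
      · exact hcomp x y vx vy vx' vy' h hx hy hx' hy'
      · subst h
        have e1 : vx = vy := Option.some_injective _ (hx.symm.trans hy)
        have e2 : vx' = vy' := Option.some_injective _ (hx'.symm.trans hy')
        subst e1; subst e2
        simp
      · have hrev := hcomp y x vy vx vy' vx' h hy hx hy' hx'
        have hne : x ≠ y := (ne_of_lt h).symm
        have n1 : vx ≠ vy := by
          intro e
          subst e
          exact hne ((hπ.2 vx).unique hx hy)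
        have n1' : vx' ≠ vy' := by
          intro e
          subst e
          exact hne ((hπ'.2 vx').unique hx' hy')
        constructor
        · intro hlt
          have : ¬ vy' < vx' := fun h' => absurd (hrev.2 h') (asymm hlt)
          exact n1'.lt_or_gt.resolve_right this
        · intro hlt
          have : ¬ vy < vx := fun h' => absurd (hrev.1 h') (asymm hlt)
          exact n1.lt_or_gt.resolve_right this
    funext m
    by_cases hm : m ∈ H
    · rw [(hπ.1 m).2 hm, (hπ'.1 m).2 hm]
    · obtain ⟨vm, hvm⟩ : ∃ vm, π m = some vm := by
        cases hc : π m with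
        | none => exact absurd ((hπ.1 m).1 hc) hm
        | some w => exact ⟨w, rfl⟩
      obtain ⟨vm', hvm'⟩ : ∃ vm', π' m = some vm' := by
        cases hc : π' m with
        | none => exact absurd ((hπ'.1 m).1 hc) hm
        | some w => exact ⟨w, rfl⟩
      rw [hvm, hvm']
      have hval : (vm : ℕ) = (vm' : ℕ) := by
        rw [← val_eq_card H π hπ (vi := vm), ← val_eq_card H π' hπ' (vi := vm')]
        congr 1
        ext m'
        simp only [Finset.mem_filter, Finset.mem_univ, true_and]
        constructor
        · rintro ⟨w, hw, hwlt⟩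
          have hm'H : m' ∉ H := by
            intro h
            have := (hπ.1 m').2 h
            rw [hw] at this
            simp at this
          obtain ⟨w', hw'⟩ : ∃ w', π' m' = some w' := by
            cases hc : π' m' with
            | none => exact absurd ((hπ'.1 m').1 hc) hm'H
            | some z => exact ⟨z, rfl⟩
          exact ⟨w', hw', (hord m' m w vm w' vm' hw hvm hw' hvm').1 hwlt⟩
        · rintro ⟨w', hw', hwlt⟩
          have hm'H : m' ∉ H := by
            intro h
            have := (hπ'.1 m').2 h
            rw [hw'] at this
            simp at this
          obtain ⟨w, hw⟩ : ∃ w, π m' = some w := by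
            cases hc : π m' with
            | none => exact absurd ((hπ.1 m').1 hc) hm'H
            | some z => exact ⟨z, rfl⟩
          exact ⟨w, hw, (hord m' m w vm w' vm' hw hvm hw' hvm').2 hwlt⟩
      exact congrArg some (Fin.val_injective hval)
  rcases isEmpty_or_nonempty
      {π : Fin n → Option (Fin (n - H.card)) // IsPPermH H π ∧ PPAvoids π p} with he | hne
  · simp
  · exact le_of_eq Nat.card_unique
end

section
/- Let p ∈ S_ℓ and k = ℓ−2. Then p is a Baxter permutation if and only if for every n ≥ k and every k-element subset H ⊆ {1,...,n}, s_n^H(p) = 1. Moreover these conditions are equivalent to: for n = k+3 and every k-element H ⊆ [n], s_n^H(p) = 1; and to: there exists n ≥ k+3 such that s_n^H(p) = 1 for every k-element H ⊆ [n]. -/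
open Finset

lemma countLt {ℓ : ℕ} (x : Fin ℓ) : ((univ : Finset (Fin ℓ)).filter (fun c => c < x)).card = x := by
  have : (univ : Finset (Fin ℓ)).filter (fun c => c < x) = Finset.Iio x := by
    ext c; simp
  rw [this, Fin.card_Iio]


lemma countEmb {n m : ℕ} (s : Finset (Fin n)) (h : s.card = m) (j : Fin m) :
    (s.filter (fun x => x < s.orderEmbOfFin h j)).card = j := by
  classical
  have himg : s.filter (fun x => x < s.orderEmbOfFin h j)
      = Finset.image (s.orderEmbOfFin h) (univ.filter (fun t => t < j)) := by
    ext x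
    simp only [mem_filter, mem_image, mem_univ, true_and]
    constructor
    · rintro ⟨hxs, hlt⟩
      have : x ∈ Set.range (s.orderEmbOfFin h) := by
        rw [Finset.range_orderEmbOfFin]; exact hxs
      obtain ⟨t, ht⟩ := this
      exact ⟨t, by rw [← ht] at hlt; exact (OrderEmbedding.lt_iff_lt _).mp hlt, ht⟩
    · rintro ⟨t, htj, rfl⟩
      exact ⟨Finset.orderEmbOfFin_mem s h t, (OrderEmbedding.lt_iff_lt _).mpr htj⟩
  rw [himg, Finset.card_image_of_injective _ (s.orderEmbOfFin h).injective, countLt]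


lemma memEmb {n m : ℕ} (s : Finset (Fin n)) (h : s.card = m) {x : Fin n} (hx : x ∈ s) :
    ∃ j : Fin m, s.orderEmbOfFin h j = x := by
  have : x ∈ Set.range (s.orderEmbOfFin h) := by rw [Finset.range_orderEmbOfFin]; exact hx
  exact this


lemma exists_perm_of_sto {m : ℕ} (r : Fin m → Fin m → Prop)
    (irr : ∀ s, ¬ r s s) (tr : ∀ {s t u}, r s t → r t u → r s u)
    (tot : ∀ s t, s ≠ t → r s t ∨ r t s) :
    ∃ σ : Equiv.Perm (Fin m), ∀ s t, σ s < σ t ↔ r s t := by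
  classical
  have hcard : ∀ s : Fin m, (univ.filter (fun t => r t s)).card < m := by
    intro s
    have hsub : univ.filter (fun t => r t s) ⊆ univ.erase s := by
      intro t ht
      simp only [mem_filter] at ht
      apply Finset.mem_erase.mpr
      exact ⟨fun he => irr s (he ▸ ht.2), mem_univ t⟩
    calc (univ.filter (fun t => r t s)).card ≤ (univ.erase s).card := Finset.card_le_card hsub
      _ = m - 1 := by rw [Finset.card_erase_of_mem (mem_univ s)]; simp
      _ < m := by have : 0 < m := Fin.pos s; omega
  set f : Fin m → Fin m := fun s => ⟨(univ.filter (fun t => r t s)).card, hcard s⟩ with hf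
  have hmono : ∀ {s t}, r s t → f s < f t := by
    intro s t hst
    have hsub : univ.filter (fun u => r u s) ⊂ univ.filter (fun u => r u t) := by
      constructor
      · intro u hu; simp only [mem_filter, mem_univ, true_and] at *; exact tr hu hst
      · intro hco
        have : s ∈ univ.filter (fun u => r u s) := hco (by simp [hst])
        simp only [mem_filter] at this
        exact irr s this.2
    exact Finset.card_lt_card hsub
  have hinj : Function.Injective f := by
    intro s t hst
    by_contra hne
    rcases tot s t hne with h | h
    · exact absurd hst (Fin.ne_of_lt (hmono h))
    · exact absurd hst.symm (Fin.ne_of_lt (hmono h))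
  have hbij : Function.Bijective f := (Finite.injective_iff_bijective).mp hinj
  refine ⟨Equiv.ofBijective f hbij, ?_⟩
  intro s t
  constructor
  · intro hlt
    rcases eq_or_ne s t with rfl | hne
    · exact absurd hlt (lt_irrefl _)
    · rcases tot s t hne with h | h
      · exact h
      · exact absurd hlt (asymm (hmono h))
  · intro h; exact hmono h


lemma strictMono_fin_id {m : ℕ} (f : Fin m → Fin m) (hf : StrictMono f) : ∀ i, f i = i := by
  have hbij : Function.Bijective f := Finite.injective_iff_bijective.mp hf.injective
  intro i
  have h1 := Fin.coe_orderIso_apply (StrictMono.orderIsoOfSurjective f hf hbij.2) i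
  have h2 : (StrictMono.orderIsoOfSurjective f hf hbij.2) i = f i :=
    congrFun (StrictMono.coe_orderIsoOfSurjective f hf hbij.2) i
  rw [h2] at h1
  exact Fin.ext h1

lemma exists_extension {n ℓ m : ℕ} (p : Fin ℓ → Fin ℓ) (hp : Function.Injective p)
    (π : Fin n → Option (Fin m))
    (hvinj : ∀ i j v, π i = some v → π j = some v → i = j)
    (g : Fin ℓ → Fin n) (hg : StrictMono g)
    (hmatch : ∀ a b va vb, π (g a) = some va → π (g b) = some vb → (va < vb ↔ p a < p b)) :
    ∃ σ : Equiv.Perm (Fin n), IsExtension σ π ∧ ContainsPat (⇑σ) p := by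
  classical
  set B : Fin ℓ → ℕ := fun a => Finset.univ.sup
    (fun c : Fin ℓ => (π (g c)).elim 0 (fun w => if p c < p a then (w : ℕ) + 1 else 0)) with hB
  set mainkey : Fin n → ℕ := fun i => (π i).elim
    (if h : ∃ a, g a = i then B h.choose * (ℓ + 3) + (p h.choose : ℕ) + 1 else 0)
    (fun w => ((w : ℕ) + 1) * (ℓ + 3)) with hmk
  set key : Fin n → ℕ := fun i => mainkey i * (n + 1) + (i : ℕ) with hkey
  have mainkey_some : ∀ i w, π i = some w → mainkey i = ((w : ℕ) + 1) * (ℓ + 3) := by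
    intro i w hw; simp only [hmk, hw, Option.elim]
  have mainkey_hole : ∀ a, π (g a) = none →
      mainkey (g a) = B a * (ℓ + 3) + (p a : ℕ) + 1 := by
    intro a ha
    have hex : ∃ a', g a' = g a := ⟨a, rfl⟩
    have hch : hex.choose = a := hg.injective hex.choose_spec
    simp only [hmk, ha, Option.elim, dif_pos hex, hch]
  have hkeylt : ∀ s t : Fin n, mainkey s < mainkey t → key s < key t := by
    intro s t h
    have h1 : key s < (mainkey s + 1) * (n + 1) := by
      simp only [hkey]; have := s.isLt; nlinarith
    have h2 : (mainkey s + 1) * (n + 1) ≤ mainkey t * (n + 1) :=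
      Nat.mul_le_mul_right _ h
    have h3 : mainkey t * (n + 1) ≤ key t := by simp [hkey]
    omega
  have keyinj : ∀ s t : Fin n, key s = key t → s = t := by
    intro s t h
    have hs : key s % (n + 1) = (s : ℕ) := by
      show (mainkey s * (n + 1) + (s : ℕ)) % (n + 1) = (s : ℕ)
      rw [Nat.mul_add_mod']; exact Nat.mod_eq_of_lt (Nat.lt_succ_of_lt s.isLt)
    have ht : key t % (n + 1) = (t : ℕ) := by
      show (mainkey t * (n + 1) + (t : ℕ)) % (n + 1) = (t : ℕ)
      rw [Nat.mul_add_mod']; exact Nat.mod_eq_of_lt (Nat.lt_succ_of_lt t.isLt)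
    exact Fin.ext (by rw [← hs, ← ht, h])
  -- main monotonicity claim
  have claim : ∀ a b : Fin ℓ, p a < p b → mainkey (g a) < mainkey (g b) := by
    intro a b hab
    rcases hga : π (g a) with _ | wa <;> rcases hgb : π (g b) with _ | wb
    · -- both holes
      rw [mainkey_hole a hga, mainkey_hole b hgb]
      have hBB : B a ≤ B b := by
        apply Finset.sup_mono_fun
        intro c _
        rcases hc : π (g c) with _ | w
        · simp [Option.elim]
        · simp only [Option.elim]
          split
          · next h => rw [if_pos (h.trans hab)]
          · omega
      have : (p a : ℕ) < (p b : ℕ) := hab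
      have := Nat.mul_le_mul_right (ℓ + 3) hBB
      omega
    · -- a hole, b filled
      rw [mainkey_hole a hga, mainkey_some _ _ hgb]
      have hBwb : B a ≤ (wb : ℕ) := by
        apply Finset.sup_le
        intro c _
        rcases hc : π (g c) with _ | w
        · simp [Option.elim]
        · simp only [Option.elim]
          split
          · next h =>
            have : w < wb := (hmatch c b w wb hc hgb).mpr (h.trans hab)
            exact this
          · omega
      have hpa : (p a : ℕ) < ℓ := (p a).isLt
      have h5 := Nat.mul_le_mul_right (ℓ + 3) hBwb
      have h6 : ((wb:ℕ) + 1) * (ℓ + 3) = (wb:ℕ) * (ℓ + 3) + (ℓ + 3) := by ring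
      omega
    · -- a filled, b hole
      rw [mainkey_some _ _ hga, mainkey_hole b hgb]
      have hwB : (wa : ℕ) + 1 ≤ B b := by
        have := Finset.le_sup (f := fun c : Fin ℓ => (π (g c)).elim 0
          (fun w => if p c < p b then (w : ℕ) + 1 else 0)) (Finset.mem_univ a)
        simpa [hga, Option.elim, if_pos hab, hB] using this
      have := Nat.mul_le_mul_right (ℓ + 3) hwB
      omega
    · -- both filled
      rw [mainkey_some _ _ hga, mainkey_some _ _ hgb]
      have : wa < wb := (hmatch a b wa wb hga hgb).mpr hab
      have h4 : (wa : ℕ) < (wb : ℕ) := this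
      have h5 := Nat.mul_le_mul_right (ℓ + 3) (show (wa:ℕ)+1 ≤ (wb:ℕ) from h4)
      have h6 : ((wa:ℕ) + 1) * (ℓ + 3) = (wa:ℕ) * (ℓ + 3) + (ℓ + 3) := by ring
      have h7 : ((wb:ℕ) + 1) * (ℓ + 3) = (wb:ℕ) * (ℓ + 3) + (ℓ + 3) := by ring
      omega
  obtain ⟨σ, hσ⟩ := exists_perm_of_sto (fun s t : Fin n => key s < key t)
    (fun s => lt_irrefl _) (fun h1 h2 => lt_trans h1 h2)
    (fun s t hst => by
      rcases Nat.lt_trichotomy (key s) (key t) with h | h | h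
      · exact Or.inl h
      · exact absurd (keyinj s t h) hst
      · exact Or.inr h)
  refine ⟨σ, ?_, ⟨g, hg, ?_⟩⟩
  · intro i j vi vj hi hj
    rw [hσ]
    constructor
    · intro hk
      rcases lt_trichotomy vi vj with h | h | h
      · exact h
      · exfalso; apply absurd hk; subst h
        have := hvinj i j vi hi hj; subst this; exact lt_irrefl _
      · exfalso
        have : mainkey j < mainkey i := by
          rw [mainkey_some _ _ hi, mainkey_some _ _ hj]
          have : (vj : ℕ) < vi := h
          nlinarith
        exact absurd hk (asymm (hkeylt _ _ this))
    · intro h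
      apply hkeylt
      rw [mainkey_some _ _ hi, mainkey_some _ _ hj]
      have : (vi : ℕ) < vj := h
      nlinarith
  · intro a b
    rw [hσ]
    constructor
    · intro hk
      rcases lt_trichotomy (p a) (p b) with h | h | h
      · exact h
      · exfalso
        have : a = b := hp h
        subst this; exact absurd hk (lt_irrefl _)
      · exact absurd hk (asymm (hkeylt _ _ (claim b a h)))
    · intro h
      exact hkeylt _ _ (claim a b h)

lemma forced_pair {n k M : ℕ} (p : Fin (k+2) → Fin (k+2)) (hp : Function.Injective p)
    {H : Finset (Fin n)} (hH : H.card = k)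
    {π : Fin n → Option (Fin M)}
    (hnone : ∀ x, π x = none ↔ x ∈ H)
    (huniq : ∀ i j v, π i = some v → π j = some v → i = j)
    (hav : PPAvoids π p)
    {i j : Fin n} (hij : i < j)
    {vi vj : Fin M} (hvi : π i = some vi) (hvj : π j = some vj)
    (h1 : (H.filter (fun x => x < i)).card < k+2)
    (h2 : (H.filter (fun x => x < j)).card + 1 < k+2) :
    (vi < vj ↔ p ⟨(H.filter (fun x => x < j)).card + 1, h2⟩
      < p ⟨(H.filter (fun x => x < i)).card, h1⟩) := by
  classical
  by_contra hcon
  set ci := (H.filter (fun x => x < i)).card with hci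
  set cj := (H.filter (fun x => x < j)).card with hcj
  have hiH : i ∉ H := fun h => by simp [(hnone i).mpr h] at hvi
  have hjH : j ∉ H := fun h => by simp [(hnone j).mpr h] at hvj
  have hneij : i ≠ j := Fin.ne_of_lt hij
  have hvne : vi ≠ vj := by
    intro h; subst h; exact hneij (huniq i j vi hvi hvj)
  have hcile : ci ≤ cj := Finset.card_le_card (by
    intro x hx; simp only [mem_filter] at *; exact ⟨hx.1, hx.2.trans hij⟩)
  have hidxne : (⟨ci, h1⟩ : Fin (k+2)) ≠ ⟨cj + 1, h2⟩ := by
    intro h; have : ci = cj + 1 := congrArg Fin.val h; omega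
  have hpne : p ⟨ci, h1⟩ ≠ p ⟨cj + 1, h2⟩ := fun h => hidxne (hp h)
  have hBC := hpne.lt_or_gt
  have hnotboth : ¬(p ⟨ci, h1⟩ < p ⟨cj+1, h2⟩ ∧ p ⟨cj+1, h2⟩ < p ⟨ci, h1⟩) :=
    fun ⟨x, y⟩ => absurd x (asymm y)
  have hmatch0 : vi < vj ↔ p ⟨ci, h1⟩ < p ⟨cj + 1, h2⟩ := by tauto
  -- build the pattern occurrence with positions H ∪ {i,j}
  set G : Finset (Fin n) := insert i (insert j H) with hG
  have hGcard : G.card = k + 2 := by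
    rw [hG, Finset.card_insert_of_notMem (by simp [hiH, hneij]),
      Finset.card_insert_of_notMem hjH, hH]
  set g := G.orderEmbOfFin hGcard with hg
  obtain ⟨ai, hai⟩ := memEmb G hGcard (show i ∈ G by simp [hG])
  obtain ⟨aj, haj⟩ := memEmb G hGcard (show j ∈ G by simp [hG])
  have hfi : G.filter (fun x => x < i) = H.filter (fun x => x < i) := by
    ext x
    simp only [hG, mem_filter, mem_insert]
    constructor
    · rintro ⟨h | h | h, hlt⟩
      · exact absurd hlt (h ▸ lt_irrefl _)
      · exact absurd (h ▸ hlt) (asymm hij)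
      · exact ⟨h, hlt⟩
    · rintro ⟨hx, hlt⟩; exact ⟨Or.inr (Or.inr hx), hlt⟩
  have hfj : G.filter (fun x => x < j) = insert i (H.filter (fun x => x < j)) := by
    ext x
    simp only [hG, mem_filter, mem_insert]
    constructor
    · rintro ⟨h | h | h, hlt⟩
      · exact Or.inl h
      · exact absurd hlt (h ▸ lt_irrefl _)
      · exact Or.inr ⟨h, hlt⟩
    · rintro (rfl | ⟨hx, hlt⟩)
      · exact ⟨Or.inl rfl, hij⟩
      · exact ⟨Or.inr (Or.inr hx), hlt⟩
  have hval_ai : (ai : ℕ) = ci := by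
    have := countEmb G hGcard ai
    rw [hai, hfi] at this
    omega
  have hval_aj : (aj : ℕ) = cj + 1 := by
    have := countEmb G hGcard aj
    rw [haj, hfj, Finset.card_insert_of_notMem (by simp [hiH])] at this
    omega
  have hmema : ∀ a : Fin (k+2), g a ∉ H → g a = i ∨ g a = j := by
    intro a ha
    have : g a ∈ G := Finset.orderEmbOfFin_mem G hGcard a
    rw [hG] at this
    rcases Finset.mem_insert.mp this with h | h
    · exact Or.inl h
    · rcases Finset.mem_insert.mp h with h | h
      · exact Or.inr h
      · exact absurd h ha
  have hmatch : ∀ a b va vb, π ((G.orderEmbOfFin hGcard) a) = some va →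
      π ((G.orderEmbOfFin hGcard) b) = some vb → (va < vb ↔ p a < p b) := by
    intro a b va vb hva hvb
    have hcase : ∀ c : Fin (k+2), ∀ vc, π ((G.orderEmbOfFin hGcard) c) = some vc →
        ((G.orderEmbOfFin hGcard) c = i ∧ vc = vi ∧ c = ai) ∨
        ((G.orderEmbOfFin hGcard) c = j ∧ vc = vj ∧ c = aj) := by
      intro c vc hvc
      have hcH : (G.orderEmbOfFin hGcard) c ∉ H := fun h => by
        rw [(hnone _).mpr h] at hvc; simp at hvc
      rcases hmema c hcH with h | h
      · left
        refine ⟨h, ?_, ?_⟩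
        · rw [h] at hvc; rw [hvc] at hvi; exact (Option.some_inj.mp hvi).symm.symm
        · exact (G.orderEmbOfFin hGcard).injective (by rw [hai, ← h])
      · right
        refine ⟨h, ?_, ?_⟩
        · rw [h] at hvc; rw [hvc] at hvj; exact (Option.some_inj.mp hvj).symm.symm
        · exact (G.orderEmbOfFin hGcard).injective (by rw [haj, ← h])
    have hrev : vj < vi ↔ p ⟨cj + 1, h2⟩ < p ⟨ci, h1⟩ := by
      constructor
      · intro h
        rcases lt_trichotomy (p ⟨ci,h1⟩) (p ⟨cj+1,h2⟩) with h' | h' | h'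
        · exact absurd (hmatch0.mpr h') (asymm h)
        · exact absurd h' hpne
        · exact h'
      · intro h
        rcases lt_trichotomy vi vj with h' | h' | h'
        · exact absurd (hmatch0.mp h') (asymm h)
        · exact absurd h' hvne
        · exact h'
    have hpai : p ai = p ⟨ci, h1⟩ := by congr 1; exact Fin.ext hval_ai
    have hpaj : p aj = p ⟨cj + 1, h2⟩ := by congr 1; exact Fin.ext hval_aj
    rcases hcase a va hva with ⟨_, rfl, rfl⟩ | ⟨_, rfl, rfl⟩ <;>
      rcases hcase b vb hvb with ⟨_, rfl, rfl⟩ | ⟨_, rfl, rfl⟩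
    · simp
    · rw [hpai, hpaj]; exact hmatch0
    · rw [hpai, hpaj]; exact hrev
    · simp
  obtain ⟨σ, hext, hcont⟩ := exists_extension p hp π huniq (G.orderEmbOfFin hGcard)
    (G.orderEmbOfFin hGcard).strictMono hmatch
  exact hav σ hext hcont

lemma lemX {k : ℕ} (p : Fin (k+2) → Fin (k+2)) (hp : Function.Injective p) :
    ∀ r'' : ℕ, ∀ (a : Fin (r''+2) → Fin (k+2)) (α : Fin (r''+2) → ℕ),
    StrictMono a →
    (∀ i, (a i : ℕ) ≤ α i + (i : ℕ)) →
    (∀ i, α i + (i : ℕ) ≤ (a i : ℕ) + r'') →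
    (∀ i j : Fin (r''+2), i ≤ j → α i + (i:ℕ) + (a j : ℕ) ≤ α j + (j:ℕ) + (a i : ℕ)) →
    (∀ i j : Fin (r''+2), i < j → ∀ (hb1 : α i < k+2) (hb2 : α j + 1 < k+2),
      (p (a i) < p (a j) ↔ p ⟨α j + 1, hb2⟩ < p ⟨α i, hb1⟩)) → False := by
  intro r''
  induction r'' with
  | zero =>
    intro a α ha h1 h2 _ hcmp
    have e0 : α 0 = (a 0 : ℕ) := by have := h1 0; have := h2 0; simp at *; omega
    have e1 : α 1 + 1 = (a 1 : ℕ) := by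
      have := h1 1; have := h2 1; simp [Fin.val_one] at *; omega
    have hlt : a 0 < a 1 := ha (by norm_num : (0 : Fin 2) < 1)
    have hb1 : α 0 < k + 2 := by rw [e0]; exact (a 0).isLt
    have hb2 : α 1 + 1 < k + 2 := by rw [e1]; exact (a 1).isLt
    have := hcmp 0 1 (by norm_num) hb1 hb2
    have hE1 : (⟨α 1 + 1, hb2⟩ : Fin (k+2)) = a 1 := Fin.ext e1
    have hE0 : (⟨α 0, hb1⟩ : Fin (k+2)) = a 0 := Fin.ext e0
    rw [hE1, hE0] at this
    have hne : p (a 0) ≠ p (a 1) := fun h => absurd (hp h) (Fin.ne_of_lt hlt)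
    rcases hne.lt_or_gt with h | h
    · exact absurd (this.mp h) (asymm h)
    · exact absurd (this.mpr h) (asymm h)
  | succ r'' ih =>
    intro a α ha h1 h2 h3 hcmp
    set last2 : Fin (r''+3) := ⟨r''+1, by omega⟩ with hlast2
    by_cases hA : α last2 + (r''+1) ≤ (a last2 : ℕ) + r''
    · -- drop the last element
      apply ih (fun j => a j.castSucc) (fun j => α j.castSucc)
        (fun i j hij => ha (by simpa using hij))
        (fun i => h1 i.castSucc)
        ?_ (fun i j hij => h3 i.castSucc j.castSucc (by simpa using hij))
        (fun i j hij hb1 hb2 => hcmp i.castSucc j.castSucc (by simpa using hij) hb1 hb2)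
      intro j
      have hle : j.castSucc ≤ last2 := by
        rw [Fin.le_def]; simp [hlast2]; omega
      have := h3 j.castSucc last2 hle
      simp only [Fin.coe_castSucc] at *
      have hcs : ((j.castSucc : Fin (r''+3)) : ℕ) = (j : ℕ) := rfl
      have hl2 : (last2 : ℕ) = r''+1 := rfl
      have hl2' : ((⟨r''+1, by omega⟩ : Fin (r''+3)) : ℕ) = r''+1 := rfl
      omega
    · push_neg at hA
      classical
      have hSne : (univ.filter
          (fun j : Fin (r''+3) => (j:ℕ) ≤ r''+1 ∧ (a j : ℕ) + 1 ≤ α j + (j:ℕ))).Nonempty := by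
        refine ⟨last2, ?_⟩
        rw [mem_filter]
        refine ⟨mem_univ _, ?_⟩
        have hv : (last2 : ℕ) = r''+1 := rfl
        rw [hv]; omega
      set istar := (univ.filter
          (fun j : Fin (r''+3) => (j:ℕ) ≤ r''+1 ∧ (a j : ℕ) + 1 ≤ α j + (j:ℕ))).min' hSne
        with histar
      have histar_p : (istar : ℕ) ≤ r''+1 ∧ (a istar : ℕ) + 1 ≤ α istar + (istar:ℕ) := by
        have h4 := Finset.min'_mem _ hSne
        rw [mem_filter] at h4
        exact h4.2
      have histar_min : ∀ j : Fin (r''+3), (j:ℕ) ≤ r''+1 → (a j : ℕ) + 1 ≤ α j + (j:ℕ) →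
          istar ≤ j := by
        intro j hj1 hj2
        exact Finset.min'_le _ _ (by rw [mem_filter]; exact ⟨mem_univ _, hj1, hj2⟩)
      set t : ℕ := (istar : ℕ) - 1 with hT
      have htle : t ≤ r'' + 1 := by omega
      have F0 : ∀ j : Fin (r''+3), (j:ℕ) < (istar:ℕ) → (a j : ℕ) = α j + (j:ℕ) := by
        intro j hj
        have := h1 j
        by_cases hn : (a j : ℕ) + 1 ≤ α j + (j:ℕ)
        · exfalso
          have hle := histar_min j (by omega) hn
          rw [Fin.le_def] at hle
          omega
        · omega
      have F1 : ∀ j : Fin (r''+3), (istar:ℕ) ≤ (j:ℕ) → (a j : ℕ) + 1 ≤ α j + (j:ℕ) := by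
        intro j hj
        have hle : istar ≤ j := Fin.le_def.mpr hj
        have := h3 istar j hle
        omega
      set emb : Fin (r''+2) → Fin (r''+3) := fun j =>
        if (j:ℕ) < t then j.castSucc else j.succ with hemb
      have hembval : ∀ j : Fin (r''+2), (emb j : ℕ) = if (j:ℕ) < t then (j:ℕ) else (j:ℕ)+1 := by
        intro j
        by_cases h : (j:ℕ) < t
        · simp [hemb, h]
        · simp [hemb, h]
      have hembmono : StrictMono emb := by
        intro i j hij
        rw [Fin.lt_def, hembval i, hembval j]
        have : (i:ℕ) < (j:ℕ) := hij
        split <;> split <;> omega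
      -- case facts for new sequences
      have key1 : ∀ j : Fin (r''+2), (j:ℕ) < t → (a (emb j) : ℕ) = α (emb j) + (j:ℕ) := by
        intro j hj
        have hv : (emb j : ℕ) = (j:ℕ) := by rw [hembval, if_pos hj]
        have := F0 (emb j) (by omega)
        omega
      have key2 : ∀ j : Fin (r''+2), t ≤ (j:ℕ) → (emb j : ℕ) = (j:ℕ)+1 ∧
          (a (emb j) : ℕ) + 1 ≤ α (emb j) + (j:ℕ) + 1 := by
        intro j hj
        have hv : (emb j : ℕ) = (j:ℕ)+1 := by rw [hembval, if_neg (by omega)]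
        have := F1 (emb j) (by omega)
        exact ⟨hv, by omega⟩
      apply ih (fun j => a (emb j)) (fun j => α (emb j)) (ha.comp hembmono)
      · intro i
        by_cases hi : (i:ℕ) < t
        · have := key1 i hi; omega
        · have := key2 i (by omega); omega
      · intro i
        by_cases hi : (i:ℕ) < t
        · have h4 := key1 i hi
          have := h2 (emb i)
          have hv : (emb i : ℕ) = (i:ℕ) := by rw [hembval, if_pos hi]
          omega
        · have h4 := key2 i (by omega)
          have := h2 (emb i)
          omega
      · intro i j hij
        by_cases hi : (i:ℕ) < t <;> by_cases hj : (j:ℕ) < t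
        · have := key1 i hi; have := key1 j hj; omega
        · have h4 := key1 i hi
          have h5 := key2 j (by omega)
          omega
        · exfalso
          have : (i:ℕ) ≤ (j:ℕ) := hij
          omega
        · have h4 := key2 i (by omega)
          have h5 := key2 j (by omega)
          have hle : emb i ≤ emb j := hembmono.monotone hij
          have := h3 (emb i) (emb j) hle
          omega
      · intro i j hij hb1 hb2
        exact hcmp (emb i) (emb j) (hembmono hij) hb1 hb2

set_option maxHeartbeats 2000000 in
lemma exists_avoider {n k : ℕ} (p : Fin (k+2) → Fin (k+2)) (hp : Function.Injective p)
    (hbax : IsBaxter p) (H : Finset (Fin n)) (hH : H.card = k) :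
    ∃ π : Fin n → Option (Fin (n - H.card)),
      ((∀ x, π x = none ↔ x ∈ H) ∧ ∀ v, ∃! x, π x = some v) ∧ PPAvoids π p := by
  classical
  set M := n - H.card with hM
  set F : Finset (Fin n) := Hᶜ with hF
  have hFcard : F.card = M := by
    rw [hF, Finset.card_compl, hM]
    simp
  set e := F.orderEmbOfFin hFcard with he
  set φ : Fin M → ℕ := fun s => (H.filter (fun x => x < e s)).card with hφ
  have hφk : ∀ s, φ s ≤ k := fun s => le_trans (Finset.card_filter_le _ _) (le_of_eq hH)
  have hφmono : ∀ {s t : Fin M}, s ≤ t → φ s ≤ φ t := by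
    intro s t hst
    apply Finset.card_le_card
    intro x hx
    rw [mem_filter] at *
    exact ⟨hx.1, lt_of_lt_of_le hx.2 (e.monotone hst)⟩
  set P : Fin M → Fin M → Prop := fun s t =>
    p ⟨φ t + 1, by have := hφk t; omega⟩ < p ⟨φ s, by have := hφk s; omega⟩ with hP
  -- the two no-cycle facts, consequences of Baxter
  have noCyc1 : ∀ x y z : Fin M, x < y → y < z → P x y → P y z → P x z := by
    intro x y z hxy hyz h1 h2
    by_contra h3
    rw [hP] at *
    set A : Fin (k+2) := ⟨φ x, by have := hφk x; omega⟩
    set B : Fin (k+2) := ⟨φ y, by have := hφk y; omega⟩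
    set C : Fin (k+2) := ⟨φ y + 1, by have := hφk y; omega⟩
    set D : Fin (k+2) := ⟨φ z + 1, by have := hφk z; omega⟩
    have hxyφ : φ x ≤ φ y := hφmono hxy.le
    have hyzφ : φ y ≤ φ z := hφmono hyz.le
    -- h1 : p C < p A, h2 : p D < p B, h3 : ¬ p D < p A
    have hAD : (A:ℕ) ≠ (D:ℕ) := by show φ x ≠ φ z + 1; omega
    have hpAD : p A < p D := by
      rcases lt_trichotomy (p A) (p D) with h | h | h
      · exact h
      · exact absurd (hp h) (by intro hq; exact hAD (congrArg Fin.val hq))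
      · exact absurd h h3
    -- rule out degenerate cases
    have hxyne : φ x ≠ φ y := by
      intro hq
      have hAB : A = B := Fin.ext hq
      have h5 : p B < p D := by rw [← hAB]; exact hpAD
      exact absurd (h5.trans h2) (lt_irrefl _)
    have hyzne : φ y ≠ φ z := by
      intro hq
      have hCD : C = D := Fin.ext (show φ y + 1 = φ z + 1 by omega)
      have h5 : p D < p A := by rw [← hCD]; exact h1
      exact absurd (h5.trans hpAD) (lt_irrefl _)
    apply hbax
    exact ⟨A, B, C, D, by rw [Fin.lt_def]; show φ x < φ y; omega,
      rfl, by rw [Fin.lt_def]; show φ y + 1 < φ z + 1; omega,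
      Or.inl ⟨h1, hpAD, h2⟩⟩
  have noCyc2 : ∀ x y z : Fin M, x < y → y < z → ¬P x y → ¬P y z → ¬P x z := by
    intro x y z hxy hyz h1 h2 h3
    rw [hP] at *
    set A : Fin (k+2) := ⟨φ x, by have := hφk x; omega⟩
    set B : Fin (k+2) := ⟨φ y, by have := hφk y; omega⟩
    set C : Fin (k+2) := ⟨φ y + 1, by have := hφk y; omega⟩
    set D : Fin (k+2) := ⟨φ z + 1, by have := hφk z; omega⟩
    have hxyφ : φ x ≤ φ y := hφmono hxy.le
    have hyzφ : φ y ≤ φ z := hφmono hyz.le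
    -- h1 : ¬ p C < p A, h2 : ¬ p D < p B, h3 : p D < p A
    have hAC : (A:ℕ) ≠ (C:ℕ) := by show φ x ≠ φ y + 1; omega
    have hpAC : p A < p C := by
      rcases lt_trichotomy (p A) (p C) with h | h | h
      · exact h
      · exact absurd (hp h) (by intro hq; exact hAC (congrArg Fin.val hq))
      · exact absurd h h1
    have hBD : (B:ℕ) ≠ (D:ℕ) := by show φ y ≠ φ z + 1; omega
    have hpBD : p B < p D := by
      rcases lt_trichotomy (p B) (p D) with h | h | h
      · exact h
      · exact absurd (hp h) (by intro hq; exact hBD (congrArg Fin.val hq))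
      · exact absurd h h2
    have hxyne : φ x ≠ φ y := by
      intro hq
      have hAB : A = B := Fin.ext hq
      have h5 : p D < p B := by rw [← hAB]; exact h3
      exact h2 h5
    have hyzne : φ y ≠ φ z := by
      intro hq
      have hCD : C = D := Fin.ext (show φ y + 1 = φ z + 1 by omega)
      have h5 : p C < p A := by rw [hCD]; exact h3
      exact h1 h5
    apply hbax
    exact ⟨A, B, C, D, by rw [Fin.lt_def]; show φ x < φ y; omega,
      rfl, by rw [Fin.lt_def]; show φ y + 1 < φ z + 1; omega,
      Or.inr ⟨hpBD, h3, hpAC⟩⟩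
  -- the strict total order
  set prec : Fin M → Fin M → Prop := fun s t =>
    if s < t then P s t else if t < s then ¬ P t s else False with hprec
  have prec_lt : ∀ {s t}, s < t → (prec s t ↔ P s t) := by
    intro s t h; rw [hprec]; simp [h]
  have prec_gt : ∀ {s t}, t < s → (prec s t ↔ ¬ P t s) := by
    intro s t h
    rw [hprec]
    have : ¬ s < t := asymm h
    simp [this, h]
  have prec_irr : ∀ s, ¬ prec s s := by intro s; rw [hprec]; simp
  have prec_trans : ∀ {s t u}, prec s t → prec t u → prec s u := by
    intro s t u hst htu
    rcases lt_trichotomy s t with h1 | h1 | h1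
    · rw [prec_lt h1] at hst
      rcases lt_trichotomy t u with h2 | h2 | h2
      · rw [prec_lt h2] at htu
        rw [prec_lt (h1.trans h2)]
        exact noCyc1 s t u h1 h2 hst htu
      · exfalso; subst h2; exact absurd htu (prec_irr t)
      · rw [prec_gt h2] at htu
        rcases lt_trichotomy s u with h3 | h3 | h3
        · rw [prec_lt h3]
          by_contra hnsu
          exact absurd hst (noCyc2 s u t h3 h2 hnsu htu)
        · exfalso; subst h3; exact htu hst
        · rw [prec_gt h3]
          intro hPus
          exact htu (noCyc1 u s t h3 h1 hPus hst)
    · subst h1; exact absurd hst (prec_irr s)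
    · rw [prec_gt h1] at hst
      rcases lt_trichotomy t u with h2 | h2 | h2
      · rw [prec_lt h2] at htu
        rcases lt_trichotomy s u with h3 | h3 | h3
        · rw [prec_lt h3]
          by_contra hnsu
          exact absurd htu (noCyc2 t s u h1 h3 hst hnsu)
        · exfalso; subst h3; exact hst htu
        · rw [prec_gt h3]
          intro hPus
          exact hst (noCyc1 t u s h2 h3 htu hPus)
      · subst h2; exact absurd htu (prec_irr t)
      · rw [prec_gt h2] at htu
        rw [prec_gt (h2.trans h1)]
        exact noCyc2 u t s h2 h1 htu hst
  obtain ⟨σ₀, hσ₀⟩ := exists_perm_of_sto prec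
    (by intro s; rw [hprec]; simp)
    (fun hab hbc => prec_trans hab hbc)
    (by
      intro s t hne
      rcases lt_trichotomy s t with h | h | h
      · by_cases hPst : P s t
        · exact Or.inl ((prec_lt h).mpr hPst)
        · exact Or.inr ((prec_gt h).mpr hPst)
      · exact absurd h hne
      · by_cases hPts : P t s
        · exact Or.inr ((prec_lt h).mpr hPts)
        · exact Or.inl ((prec_gt h).mpr hPts))
  -- index of a filled position
  set idx : Fin n → ℕ := fun i => (F.filter (fun x => x < i)).card with hidxdef
  have hidxlt : ∀ i, i ∈ F → idx i < M := by
    intro i hi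
    have hsub : F.filter (fun x => x < i) ⊆ F.erase i := by
      intro x hx
      rw [mem_filter] at hx
      exact Finset.mem_erase.mpr ⟨Fin.ne_of_lt hx.2, hx.1⟩
    have h4 := Finset.card_le_card hsub
    rw [Finset.card_erase_of_mem hi, hFcard] at h4
    have hM1 : 0 < F.card := Finset.card_pos.mpr ⟨i, hi⟩
    rw [hFcard] at hM1
    simp only [hidxdef]
    omega
  have idx_e : ∀ j : Fin M, idx (e j) = (j:ℕ) := by
    intro j
    simp only [hidxdef, he]
    exact countEmb F hFcard j
  have e_idx : ∀ i (hi : i ∈ F), e ⟨idx i, hidxlt i hi⟩ = i := by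
    intro i hi
    obtain ⟨j, hj⟩ := memEmb F hFcard hi
    rw [← he] at hj
    have h4 : idx i = (j:ℕ) := by rw [← hj]; exact idx_e j
    have h5 : (⟨idx i, hidxlt i hi⟩ : Fin M) = j := Fin.ext h4
    rw [h5, hj]
  have hFH : ∀ i : Fin n, i ∉ H → i ∈ F := by
    intro i hi; rw [hF]; exact Finset.mem_compl.mpr hi
  set π : Fin n → Option (Fin M) := fun i => if h : i ∈ H then none else
      some (σ₀ ⟨idx i, hidxlt i (hFH i h)⟩) with hπdef
  have hnone : ∀ x, π x = none ↔ x ∈ H := by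
    intro x; by_cases h : x ∈ H <;> simp [hπdef, h]
  have hsome : ∀ x (hx : x ∉ H), π x = some (σ₀ ⟨idx x, hidxlt x (hFH x hx)⟩) := by
    intro x hx; simp [hπdef, hx]
  refine ⟨π, ⟨hnone, ?_⟩, ?_⟩
  · -- uniqueness of values
    intro v
    have hmem : e (σ₀.symm v) ∈ F := by rw [he]; exact Finset.orderEmbOfFin_mem F hFcard _
    have hnotH : e (σ₀.symm v) ∉ H := by
      rw [hF] at hmem; exact Finset.mem_compl.mp hmem
    refine ⟨e (σ₀.symm v), ?_, ?_⟩
    · show π (e (σ₀.symm v)) = some v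
      rw [hsome _ hnotH]
      congr 1
      have h4 : (⟨idx (e (σ₀.symm v)), hidxlt _ (hFH _ hnotH)⟩ : Fin M) = σ₀.symm v :=
        Fin.ext (idx_e _)
      rw [h4]
      exact σ₀.apply_symm_apply v
    · intro y hy
      have hyH : y ∉ H := by
        intro h
        rw [(hnone y).mpr h] at hy
        exact nomatch hy
      rw [hsome _ hyH] at hy
      have h4 : σ₀ ⟨idx y, hidxlt y (hFH y hyH)⟩ = v := Option.some_inj.mp hy
      have h5 : (⟨idx y, hidxlt y (hFH y hyH)⟩ : Fin M) = σ₀.symm v := by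
        rw [← h4]; exact (σ₀.symm_apply_apply _).symm
      rw [← e_idx y (hFH y hyH), h5]
  · -- avoidance
    intro σ hext hcont
    obtain ⟨g, hg, hpat⟩ := hcont
    set A : Finset (Fin (k+2)) := univ.filter (fun a => g a ∉ H) with hA
    have hAc : (univ.filter (fun a : Fin (k+2) => g a ∈ H)).card ≤ k := by
      have h9 : (univ.filter (fun a : Fin (k+2) => g a ∈ H)).card ≤ H.card := by
        apply Finset.card_le_card_of_injOn g
        · intro a ha; rw [Finset.mem_coe] at ha ⊢; rw [mem_filter] at ha; exact ha.2
        · intro a _ b _ hab; exact hg.injective hab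
      omega
    have hAsplit : A.card + (univ.filter (fun a : Fin (k+2) => g a ∈ H)).card = k + 2 := by
      have h4 := Finset.card_filter_add_card_filter_not
        (s := (univ : Finset (Fin (k+2)))) (p := fun a => g a ∉ H)
      have h5 : univ.filter (fun a : Fin (k+2) => ¬ (g a ∉ H))
          = univ.filter (fun a => g a ∈ H) := by ext c; simp
      rw [h5] at h4
      rw [hA]
      rw [h4]
      simp
    obtain ⟨r'', hr''⟩ : ∃ r'', A.card = r'' + 2 := ⟨A.card - 2, by omega⟩
    set av : Fin (r''+2) → Fin (k+2) := fun i => A.orderEmbOfFin hr'' i with hav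
    have havmono : StrictMono av := (A.orderEmbOfFin hr'').strictMono
    have hmemA : ∀ i, av i ∈ A := fun i => Finset.orderEmbOfFin_mem A hr'' i
    have hgA : ∀ i : Fin (r''+2), g (av i) ∉ H := by
      intro i
      have := hmemA i
      rw [hA, mem_filter] at this
      exact this.2
    have hcountA : ∀ i : Fin (r''+2), (A.filter (fun c => c < av i)).card = (i:ℕ) :=
      fun i => countEmb A hr'' i
    have hnotA : ∀ c : Fin (k+2), c ∉ A ↔ g c ∈ H := by
      intro c; rw [hA]; simp
    set alpha : Fin (r''+2) → ℕ := fun i => (H.filter (fun x => x < g (av i))).card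
      with halpha
    -- counting identities
    have hsplitLt : ∀ (x : Fin (k+2)) (B : Finset (Fin (k+2))),
        ((univ.filter (fun c => c < x)).filter (fun c => c ∈ B)).card
          + ((univ.filter (fun c => c < x)).filter (fun c => c ∉ B)).card = (x:ℕ) := by
      intro x B
      rw [Finset.card_filter_add_card_filter_not, countLt]
    have hBfilter : ∀ (x : Fin (k+2)) (B : Finset (Fin (k+2))),
        (univ.filter (fun c => c < x)).filter (fun c => c ∈ B) = B.filter (fun c => c < x) := by
      intro x B; ext c; simp only [mem_filter, mem_univ, true_and]; tauto
    have hinj1 : ∀ i : Fin (r''+2),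
        ((univ.filter (fun c => c < av i)).filter (fun c => c ∉ A)).card ≤ alpha i := by
      intro i
      apply Finset.card_le_card_of_injOn g
      · intro c hc
        rw [Finset.mem_coe] at hc ⊢
        simp only [mem_filter, mem_univ, true_and] at hc
        rw [mem_filter]
        exact ⟨(hnotA c).mp hc.2, hg hc.1⟩
      · intro c _ b _ hcb; exact hg.injective hcb
    have h1 : ∀ i, ((av i : Fin (k+2)) : ℕ) ≤ alpha i + (i:ℕ) := by
      intro i
      have n3 := hinj1 i
      have n4 := hsplitLt (av i) A
      have n5 := hBfilter (av i) A
      rw [n5, hcountA i] at n4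
      omega
    -- h2
    have hHsplit : ∀ i : Fin (r''+2),
        alpha i + (H.filter (fun x => g (av i) < x)).card = k := by
      intro i
      have h4 := Finset.card_filter_add_card_filter_not
        (s := H) (p := fun x => x < g (av i))
      have h5 : H.filter (fun x => ¬ x < g (av i)) = H.filter (fun x => g (av i) < x) := by
        ext x
        simp only [mem_filter]
        constructor
        · rintro ⟨hxH, hnlt⟩
          refine ⟨hxH, lt_of_le_of_ne (le_of_not_gt hnlt) ?_⟩
          intro hq
          exact hgA i (hq ▸ hxH)
        · rintro ⟨hxH, hlt⟩
          exact ⟨hxH, asymm hlt⟩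
      rw [h5] at h4
      rw [halpha]
      rw [h4, hH]
    have hinj2 : ∀ i : Fin (r''+2),
        ((univ.filter (fun c => av i < c)).filter (fun c => c ∉ A)).card
          ≤ (H.filter (fun x => g (av i) < x)).card := by
      intro i
      apply Finset.card_le_card_of_injOn g
      · intro c hc
        rw [Finset.mem_coe] at hc ⊢
        simp only [mem_filter, mem_univ, true_and] at hc
        rw [mem_filter]
        exact ⟨(hnotA c).mp hc.2, hg hc.1⟩
      · intro c _ b _ hcb; exact hg.injective hcb
    have hgtcount : ∀ (x : Fin (k+2)) (B : Finset (Fin (k+2))), x ∈ B →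
        (B.filter (fun c => c < x)).card + 1 + (B.filter (fun c => x < c)).card = B.card := by
      intro x B hxB
      have h4 := Finset.card_filter_add_card_filter_not
        (s := B) (p := fun c => c < x)
      have h5 : B.filter (fun c => ¬ c < x) = insert x (B.filter (fun c => x < c)) := by
        ext c
        simp only [mem_filter, mem_insert]
        constructor
        · rintro ⟨hcB, hnlt⟩
          rcases eq_or_lt_of_le (le_of_not_gt hnlt) with h | h
          · exact Or.inl h.symm
          · exact Or.inr ⟨hcB, h⟩
        · rintro (rfl | ⟨hcB, hlt⟩)
          · exact ⟨hxB, lt_irrefl _⟩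
          · exact ⟨hcB, asymm hlt⟩
      rw [h5, Finset.card_insert_of_notMem (by simp)] at h4
      omega
    have hunivcount : ∀ x : Fin (k+2),
        ((univ : Finset (Fin (k+2))).filter (fun c => c < x)).card + 1
          + (univ.filter (fun c => x < c)).card = k + 2 := by
      intro x
      have := hgtcount x univ (mem_univ x)
      rw [Finset.card_univ, Fintype.card_fin] at this
      omega
    have hsplitGt : ∀ (x : Fin (k+2)),
        ((univ.filter (fun c => x < c)).filter (fun c => c ∈ A)).card
          + ((univ.filter (fun c => x < c)).filter (fun c => c ∉ A)).card
          = (univ.filter (fun c => x < c)).card :=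
      fun x => Finset.card_filter_add_card_filter_not _
    have hBfilterGt : ∀ (x : Fin (k+2)),
        (univ.filter (fun c => x < c)).filter (fun c => c ∈ A)
          = A.filter (fun c => x < c) := by
      intro x; ext c; simp only [mem_filter, mem_univ, true_and]; tauto
    have h2 : ∀ i, alpha i + (i:ℕ) ≤ ((av i : Fin (k+2)) : ℕ) + r'' := by
      intro i
      have q1 := hHsplit i
      have q2 := hinj2 i
      have q3 := hunivcount (av i)
      have q4 := countLt (av i)
      have q5 := hsplitGt (av i)
      have q6 := hBfilterGt (av i)
      rw [q6] at q5
      have q7 := hgtcount (av i) A (hmemA i)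
      rw [hcountA i, hr''] at q7
      omega
    -- h3
    have h3 : ∀ i j : Fin (r''+2), i ≤ j →
        alpha i + (i:ℕ) + ((av j : Fin (k+2)) : ℕ)
          ≤ alpha j + (j:ℕ) + ((av i : Fin (k+2)) : ℕ) := by
      intro i j hij
      rcases eq_or_lt_of_le hij with rfl | hij
      · omega
      have hlt : av i < av j := havmono hij
      set Mid : Finset (Fin (k+2)) := univ.filter (fun c => av i < c ∧ c < av j) with hMid
      -- w2 : alpha i + (Mid.filter (· ∉ A)).card ≤ alpha j
      have w2 : alpha i + (Mid.filter (fun c => c ∉ A)).card ≤ alpha j := by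
        have hunion : (H.filter (fun x => x < g (av i)))
            ∪ (Mid.filter (fun c => c ∉ A)).image g ⊆ H.filter (fun x => x < g (av j)) := by
          intro x hx
          rcases Finset.mem_union.mp hx with hx | hx
          · rw [mem_filter] at *
            exact ⟨hx.1, hx.2.trans (hg hlt)⟩
          · obtain ⟨c, hc, rfl⟩ := Finset.mem_image.mp hx
            rw [mem_filter, hMid, mem_filter] at hc
            simp only [mem_univ, true_and] at hc
            rw [mem_filter]
            exact ⟨(hnotA c).mp hc.2, hg hc.1.2⟩
        have hdisj : Disjoint (H.filter (fun x => x < g (av i)))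
            ((Mid.filter (fun c => c ∉ A)).image g) := by
          rw [Finset.disjoint_left]
          intro x hx1 hx2
          rw [mem_filter] at hx1
          obtain ⟨c, hc, rfl⟩ := Finset.mem_image.mp hx2
          rw [mem_filter, hMid, mem_filter] at hc
          simp only [mem_univ, true_and] at hc
          exact absurd (hg hc.1.1) (asymm hx1.2)
        have h4 := Finset.card_le_card hunion
        rw [Finset.card_union_of_disjoint hdisj,
          Finset.card_image_of_injective _ hg.injective] at h4
        exact h4
      have w3 : (Mid.card) + ((av i : Fin (k+2)) : ℕ) + 1 = ((av j : Fin (k+2)) : ℕ) := by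
        have h4 : univ.filter (fun c => c < av j)
            = insert (av i) ((univ.filter (fun c => c < av i)) ∪ Mid) := by
          ext c
          simp only [mem_insert, Finset.mem_union, mem_filter, mem_univ, true_and, hMid]
          constructor
          · intro hc
            rcases lt_trichotomy c (av i) with h | h | h
            · exact Or.inr (Or.inl h)
            · exact Or.inl h
            · exact Or.inr (Or.inr ⟨h, hc⟩)
          · rintro (rfl | h | ⟨h1, h2⟩)
            · exact hlt
            · exact h.trans hlt
            · exact h2
        have h5 : av i ∉ (univ.filter (fun c => c < av i)) ∪ Mid := by
          simp [hMid]
        have h6 : Disjoint (univ.filter (fun c => c < av i)) Mid := by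
          rw [Finset.disjoint_left]
          intro c hc1 hc2
          rw [mem_filter] at hc1
          rw [hMid, mem_filter] at hc2
          exact absurd hc2.2.1 (asymm hc1.2)
        have h7 := countLt (av i)
        have h8 := countLt (av j)
        rw [h4, Finset.card_insert_of_notMem h5, Finset.card_union_of_disjoint h6, h7] at h8
        omega
      have w4 : (Mid.filter (fun c => c ∈ A)).card + (i:ℕ) + 1 = (j:ℕ) := by
        have h4 : A.filter (fun c => c < av j)
            = insert (av i) ((A.filter (fun c => c < av i)) ∪ (Mid.filter (fun c => c ∈ A))) := by
          ext c
          simp only [mem_insert, Finset.mem_union, mem_filter, hMid, mem_univ, true_and]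
          constructor
          · rintro ⟨hcA, hc⟩
            rcases lt_trichotomy c (av i) with h | h | h
            · exact Or.inr (Or.inl ⟨hcA, h⟩)
            · exact Or.inl h
            · exact Or.inr (Or.inr ⟨⟨h, hc⟩, hcA⟩)
          · rintro (rfl | ⟨hcA, h⟩ | ⟨⟨h1, h2⟩, hcA⟩)
            · exact ⟨hmemA i, hlt⟩
            · exact ⟨hcA, h.trans hlt⟩
            · exact ⟨hcA, h2⟩
        have h5 : av i ∉ (A.filter (fun c => c < av i)) ∪ (Mid.filter (fun c => c ∈ A)) := by
          simp [hMid]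
        have h6 : Disjoint (A.filter (fun c => c < av i)) (Mid.filter (fun c => c ∈ A)) := by
          rw [Finset.disjoint_left]
          intro c hc1 hc2
          rw [mem_filter] at hc1
          rw [mem_filter, hMid, mem_filter] at hc2
          simp only [mem_univ, true_and] at hc2
          exact absurd hc2.1.1 (asymm hc1.2)
        have h7 := hcountA i
        have h8 := hcountA j
        rw [h4, Finset.card_insert_of_notMem h5, Finset.card_union_of_disjoint h6, h7] at h8
        omega
      have w5 : (Mid.filter (fun c => c ∈ A)).card + (Mid.filter (fun c => c ∉ A)).card
          = Mid.card := Finset.card_filter_add_card_filter_not _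
      omega
    -- hcmp
    have hcmp : ∀ i j : Fin (r''+2), i < j → ∀ (hb1 : alpha i < k+2) (hb2 : alpha j + 1 < k+2),
        (p (av i) < p (av j) ↔ p ⟨alpha j + 1, hb2⟩ < p ⟨alpha i, hb1⟩) := by
      intro i j hij hb1 hb2
      have hxH : g (av i) ∉ H := hgA i
      have hyH : g (av j) ∉ H := hgA j
      have hxF : g (av i) ∈ F := hFH _ hxH
      have hyF : g (av j) ∈ F := hFH _ hyH
      have hxy : g (av i) < g (av j) := hg (havmono hij)
      set sx : Fin M := ⟨idx (g (av i)), hidxlt _ hxF⟩ with hsx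
      set sy : Fin M := ⟨idx (g (av j)), hidxlt _ hyF⟩ with hsy
      have hπx : π (g (av i)) = some (σ₀ sx) := hsome _ hxH
      have hπy : π (g (av j)) = some (σ₀ sy) := hsome _ hyH
      have c1 : σ (g (av i)) < σ (g (av j)) ↔ σ₀ sx < σ₀ sy :=
        hext _ _ _ _ hπx hπy
      have c2 : σ (g (av i)) < σ (g (av j)) ↔ p (av i) < p (av j) := hpat (av i) (av j)
      have c4 : sx < sy := by
        rw [Fin.lt_def]
        show idx (g (av i)) < idx (g (av j))
        simp only [hidxdef]
        apply Finset.card_lt_card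
        constructor
        · intro c hc
          rw [mem_filter] at *
          exact ⟨hc.1, hc.2.trans hxy⟩
        · intro hsub
          have : g (av i) ∈ F.filter (fun x => x < g (av i)) :=
            hsub (by rw [mem_filter]; exact ⟨hxF, hxy⟩)
          rw [mem_filter] at this
          exact absurd this.2 (lt_irrefl _)
      have c5 : prec sx sy ↔ P sx sy := prec_lt c4
      have hesx : e sx = g (av i) := by rw [hsx]; exact e_idx _ hxF
      have hesy : e sy = g (av j) := by rw [hsy]; exact e_idx _ hyF
      have c7x : φ sx = alpha i := by
        simp only [hφ, halpha]
        rw [hesx]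
      have c7y : φ sy = alpha j := by
        simp only [hφ, halpha]
        rw [hesy]
      have hpfy : φ sy + 1 < k + 2 := by have := hφk sy; omega
      have hpfx : φ sx < k + 2 := by have := hφk sx; omega
      have e1 : (⟨alpha j + 1, hb2⟩ : Fin (k+2)) = ⟨φ sy + 1, hpfy⟩ := Fin.ext (show alpha j + 1 = φ sy + 1 by omega)
      have e2 : (⟨alpha i, hb1⟩ : Fin (k+2)) = ⟨φ sx, hpfx⟩ := Fin.ext (show alpha i = φ sx by omega)
      have c6 : P sx sy ↔ (p ⟨alpha j + 1, hb2⟩ < p ⟨alpha i, hb1⟩) := by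
        constructor
        · intro h
          rw [e1, e2]
          exact h
        · intro h
          rw [e1, e2] at h
          exact h
      exact ((c2.symm.trans c1).trans ((hσ₀ sx sy).trans (c5.trans c6)))
    exact lemX p hp r'' av alpha havmono h1 h2 h3 hcmp

lemma avoider_unique {n k : ℕ} (p : Fin (k+2) → Fin (k+2)) (hp : Function.Injective p)
    {H : Finset (Fin n)} (hH : H.card = k)
    {π π' : Fin n → Option (Fin (n - H.card))}
    (hnone : ∀ x, π x = none ↔ x ∈ H) (hEx : ∀ v, ∃! x, π x = some v)
    (hav : PPAvoids π p)
    (hnone' : ∀ x, π' x = none ↔ x ∈ H) (hEx' : ∀ v, ∃! x, π' x = some v)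
    (hav' : PPAvoids π' p) : π = π' := by
  classical
  set F : Finset (Fin n) := Hᶜ with hF
  have hFcard : F.card = n - H.card := by rw [hF, Finset.card_compl]; simp
  set e := F.orderEmbOfFin hFcard with he
  have heH : ∀ s : Fin (n - H.card), e s ∉ H := by
    intro s
    have : e s ∈ F := by rw [he]; exact Finset.orderEmbOfFin_mem F hFcard s
    rw [hF] at this; exact Finset.mem_compl.mp this
  have huniqπ : ∀ i j v, π i = some v → π j = some v → i = j := by
    intro i j v hi hj
    obtain ⟨x, _, hx⟩ := hEx v
    rw [hx i hi, hx j hj]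
  have huniqπ' : ∀ i j v, π' i = some v → π' j = some v → i = j := by
    intro i j v hi hj
    obtain ⟨x, _, hx⟩ := hEx' v
    rw [hx i hi, hx j hj]
  have hvalπ : ∀ s : Fin (n - H.card), ∃ v, π (e s) = some v := by
    intro s
    rcases h : π (e s) with _ | v
    · exact absurd ((hnone _).mp h) (heH s)
    · exact ⟨v, rfl⟩
  have hvalπ' : ∀ s : Fin (n - H.card), ∃ v, π' (e s) = some v := by
    intro s
    rcases h : π' (e s) with _ | v
    · exact absurd ((hnone' _).mp h) (heH s)
    · exact ⟨v, rfl⟩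
  set u : Fin (n - H.card) → Fin (n - H.card) := fun s => (hvalπ s).choose with hu
  set u' : Fin (n - H.card) → Fin (n - H.card) := fun s => (hvalπ' s).choose with hu'
  have hus : ∀ s, π (e s) = some (u s) := fun s => (hvalπ s).choose_spec
  have hus' : ∀ s, π' (e s) = some (u' s) := fun s => (hvalπ' s).choose_spec
  have huinj : Function.Injective u := by
    intro s t h
    exact e.injective (huniqπ _ _ _ (hus s) (h ▸ hus t))
  have huinj' : Function.Injective u' := by
    intro s t h
    exact e.injective (huniqπ' _ _ _ (hus' s) (h ▸ hus' t))
  have hb1 : ∀ s : Fin (n - H.card), (H.filter (fun x => x < e s)).card < k + 2 := by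
    intro s
    have := Finset.card_filter_le H (fun x => x < e s)
    omega
  have hb2 : ∀ s : Fin (n - H.card), (H.filter (fun x => x < e s)).card + 1 < k + 2 := by
    intro s
    have := Finset.card_filter_le H (fun x => x < e s)
    omega
  have hcomp0 : ∀ s t : Fin (n - H.card), s < t → (u s < u t ↔ u' s < u' t) := by
    intro s t hst
    have hest : e s < e t := e.strictMono hst
    have f1 := forced_pair p hp hH hnone huniqπ hav hest (hus s) (hus t) (hb1 s) (hb2 t)
    have f2 := forced_pair p hp hH hnone' huniqπ' hav' hest (hus' s) (hus' t) (hb1 s) (hb2 t)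
    rw [f1, ← f2]
  have hcomp : ∀ s t : Fin (n - H.card), u s < u t → u' s < u' t := by
    intro s t h
    rcases lt_trichotomy s t with hst | hst | hst
    · exact (hcomp0 s t hst).mp h
    · subst hst; exact absurd h (lt_irrefl _)
    · have hne' : u' s ≠ u' t := fun hq => (Fin.ne_of_lt hst) (huinj' hq).symm
      rcases hne'.lt_or_gt with h2 | h2
      · exact h2
      · exact absurd ((hcomp0 t s hst).mpr h2) (asymm h)
  have hubij : Function.Bijective u := Finite.injective_iff_bijective.mp huinj
  set Eu := Equiv.ofBijective u hubij with hEu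
  have hf : StrictMono (fun w => u' (Eu.symm w)) := by
    intro w1 w2 hw
    apply hcomp
    have e1 : u (Eu.symm w1) = w1 := Eu.apply_symm_apply w1
    have e2 : u (Eu.symm w2) = w2 := Eu.apply_symm_apply w2
    rw [e1, e2]; exact hw
  have hid := strictMono_fin_id _ hf
  have hueq : ∀ s, u' s = u s := by
    intro s
    have h3 := hid (Eu s)
    have h4 : Eu.symm (Eu s) = s := Eu.symm_apply_apply s
    rw [h4] at h3
    rw [h3]
    rfl
  funext x
  by_cases hx : x ∈ H
  · rw [(hnone x).mpr hx, (hnone' x).mpr hx]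
  · have hxF : x ∈ F := by rw [hF]; exact Finset.mem_compl.mpr hx
    obtain ⟨s, hs⟩ := memEmb F hFcard hxF
    rw [← he] at hs
    rw [← hs, hus s, hus' s, hueq s]



lemma no_avoider {n k : ℕ} (p : Fin (k+2) → Fin (k+2)) (hp : Function.Injective p)
    (hnb : ¬ IsBaxter p) (hn : k + 3 ≤ n) :
    ∃ H : Finset (Fin n), H.card = k ∧
      ∀ π : Fin n → Option (Fin (n - H.card)),
        (∀ x, π x = none ↔ x ∈ H) → (∀ v, ∃! x, π x = some v) → ¬ PPAvoids π p := by
  classical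
  rw [IsBaxter, not_not] at hnb
  obtain ⟨a, b, c, d, hab, hbc, hcd, hpat⟩ := hnb
  set A := (a : ℕ) with hA
  set B := (b : ℕ) with hB
  set D := (d : ℕ) with hD
  have hABn : A < B := hab
  have hCval : (c : ℕ) = B + 1 := hbc.symm
  have hBD : B + 1 < D := by rw [← hCval]; exact hcd
  have hDk : D < k + 2 := d.isLt
  have hbound : ∀ m ∈ (Finset.range (k+3)).filter
      (fun v => v ≠ A ∧ v ≠ B+1 ∧ v ≠ D+1), m < n := by
    intro m hm
    rw [mem_filter, Finset.mem_range] at hm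
    omega
  set HH : Finset (Fin n) :=
    ((Finset.range (k+3)).filter (fun v => v ≠ A ∧ v ≠ B+1 ∧ v ≠ D+1)).attachFin hbound
    with hHdef
  have heq : (Finset.range (k+3)).filter (fun v => v ≠ A ∧ v ≠ B+1 ∧ v ≠ D+1)
      = (Finset.range (k+3)) \ {A, B+1, D+1} := by
    ext v
    simp only [mem_filter, Finset.mem_sdiff, Finset.mem_range, Finset.mem_insert,
      Finset.mem_singleton]
    tauto
  have hsub : ({A, B+1, D+1} : Finset ℕ) ⊆ Finset.range (k+3) := by
    intro v hv
    simp only [Finset.mem_insert, Finset.mem_singleton] at hv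
    rw [Finset.mem_range]
    rcases hv with rfl | rfl | rfl <;> omega
  have h3card : ({A, B+1, D+1} : Finset ℕ).card = 3 := by
    rw [Finset.card_insert_of_notMem (by simp; omega),
      Finset.card_insert_of_notMem (by simp; omega), Finset.card_singleton]
  have hcardH : HH.card = k := by
    rw [hHdef, Finset.card_attachFin, heq, Finset.card_sdiff_of_subset hsub, Finset.card_range, h3card]
    omega
  have hmemH : ∀ x : Fin n, x ∈ HH ↔
      ((x:ℕ) < k+3 ∧ (x:ℕ) ≠ A ∧ (x:ℕ) ≠ B+1 ∧ (x:ℕ) ≠ D+1) := by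
    intro x
    rw [hHdef, Finset.mem_attachFin, mem_filter, Finset.mem_range]
  refine ⟨HH, hcardH, ?_⟩
  intro π hnone hEx hav
  have huniqπ : ∀ i j v, π i = some v → π j = some v → i = j := by
    intro i j v hi hj
    obtain ⟨x, _, hx⟩ := hEx v
    rw [hx i hi, hx j hj]
  -- counting lemma specialized
  have hcount : ∀ x : Fin n, (HH.filter (fun y => y < x)).card
      = ((Finset.range (k+3)).filter
          (fun v => (v ≠ A ∧ v ≠ B+1 ∧ v ≠ D+1) ∧ v < (x:ℕ))).card := by
    intro x
    refine Finset.card_bij (fun y _ => (y : ℕ)) ?_ ?_ ?_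
    · intro y hy
      rw [mem_filter] at hy
      obtain ⟨hyH, hylt⟩ := hy
      rw [hmemH] at hyH
      rw [mem_filter, Finset.mem_range]
      exact ⟨hyH.1, ⟨hyH.2.1, hyH.2.2.1, hyH.2.2.2⟩, hylt⟩
    · intro y1 h1 y2 h2 hv
      exact Fin.ext hv
    · intro v hv
      rw [mem_filter, Finset.mem_range] at hv
      have hvn : v < n := by omega
      refine ⟨⟨v, hvn⟩, ?_, rfl⟩
      rw [mem_filter, hmemH]
      exact ⟨⟨hv.1, hv.2.1⟩, hv.2.2⟩
  -- the three filled positions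
  have hAn : A < n := by omega
  have hBn : B + 1 < n := by omega
  have hDn : D + 1 < n := by omega
  set x1 : Fin n := ⟨A, hAn⟩ with hx1def
  set x2 : Fin n := ⟨B+1, hBn⟩ with hx2def
  set x3 : Fin n := ⟨D+1, hDn⟩ with hx3def
  have hval1 : (x1 : ℕ) = A := rfl
  have hval2 : (x2 : ℕ) = B+1 := rfl
  have hval3 : (x3 : ℕ) = D+1 := rfl
  have hx1H : x1 ∉ HH := by intro hmem; rw [hmemH] at hmem; omega
  have hx2H : x2 ∉ HH := by intro hmem; rw [hmemH] at hmem; omega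
  have hx3H : x3 ∉ HH := by intro hmem; rw [hmemH] at hmem; omega
  have hv1 : ∃ v, π x1 = some v := by
    rcases h : π x1 with _ | v
    · exact absurd ((hnone _).mp h) hx1H
    · exact ⟨v, rfl⟩
  have hv2 : ∃ v, π x2 = some v := by
    rcases h : π x2 with _ | v
    · exact absurd ((hnone _).mp h) hx2H
    · exact ⟨v, rfl⟩
  have hv3 : ∃ v, π x3 = some v := by
    rcases h : π x3 with _ | v
    · exact absurd ((hnone _).mp h) hx3H
    · exact ⟨v, rfl⟩
  obtain ⟨v1, hv1⟩ := hv1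
  obtain ⟨v2, hv2⟩ := hv2
  obtain ⟨v3, hv3⟩ := hv3
  -- hole-prefix counts
  have hc1 : (HH.filter (fun y => y < x1)).card = A := by
    rw [hcount]
    have h9 : (Finset.range (k+3)).filter (fun v => (v ≠ A ∧ v ≠ B+1 ∧ v ≠ D+1) ∧ v < (x1:ℕ))
        = Finset.range A := by
      ext v
      simp only [mem_filter, Finset.mem_range, hval1]
      omega
    rw [h9, Finset.card_range]
  have hc2 : (HH.filter (fun y => y < x2)).card = B := by
    rw [hcount]
    have h9 : (Finset.range (k+3)).filter (fun v => (v ≠ A ∧ v ≠ B+1 ∧ v ≠ D+1) ∧ v < (x2:ℕ))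
        = (Finset.range (B+1)) \ {A} := by
      ext v
      simp only [mem_filter, Finset.mem_sdiff, Finset.mem_range, Finset.mem_singleton, hval2]
      omega
    rw [h9, Finset.card_sdiff_of_subset (by simp [Finset.mem_range]; omega), Finset.card_range,
      Finset.card_singleton]
    omega
  have hc3 : (HH.filter (fun y => y < x3)).card = D - 1 := by
    rw [hcount]
    have h9 : (Finset.range (k+3)).filter (fun v => (v ≠ A ∧ v ≠ B+1 ∧ v ≠ D+1) ∧ v < (x3:ℕ))
        = (Finset.range (D+1)) \ {A, B+1} := by
      ext v
      simp only [mem_filter, Finset.mem_sdiff, Finset.mem_range, Finset.mem_insert,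
        Finset.mem_singleton, hval3]
      omega
    have hsub2 : ({A, B+1} : Finset ℕ) ⊆ Finset.range (D+1) := by
      intro v hv
      simp only [Finset.mem_insert, Finset.mem_singleton] at hv
      rw [Finset.mem_range]
      rcases hv with rfl | rfl <;> omega
    rw [h9, Finset.card_sdiff_of_subset hsub2, Finset.card_range,
      Finset.card_insert_of_notMem (by simp; omega), Finset.card_singleton]
    omega
  have hx12 : x1 < x2 := by rw [Fin.lt_def, hval1, hval2]; omega
  have hx23 : x2 < x3 := by rw [Fin.lt_def, hval2, hval3]; omega
  have hx13 : x1 < x3 := hx12.trans hx23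
  have hb1 : (HH.filter (fun y => y < x1)).card < k + 2 := by rw [hc1]; omega
  have hb2 : (HH.filter (fun y => y < x2)).card < k + 2 := by rw [hc2]; omega
  have hb2' : (HH.filter (fun y => y < x2)).card + 1 < k + 2 := by rw [hc2]; omega
  have hb3' : (HH.filter (fun y => y < x3)).card + 1 < k + 2 := by rw [hc3]; omega
  have fp12 := forced_pair p hp hcardH hnone huniqπ hav hx12 hv1 hv2 hb1 hb2'
  have fp23 := forced_pair p hp hcardH hnone huniqπ hav hx23 hv2 hv3 hb2 hb3'
  have fp13 := forced_pair p hp hcardH hnone huniqπ hav hx13 hv1 hv3 hb1 hb3'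
  -- rewrite the pattern indices
  have hx2c : (⟨(HH.filter (fun y => y < x2)).card + 1, hb2'⟩ : Fin (k+2)) = c :=
    Fin.ext (show (HH.filter (fun y => y < x2)).card + 1 = (c:ℕ) by rw [hc2]; omega)
  have hx1a : (⟨(HH.filter (fun y => y < x1)).card, hb1⟩ : Fin (k+2)) = a :=
    Fin.ext (show (HH.filter (fun y => y < x1)).card = (a:ℕ) by rw [hc1])
  have hx3d : (⟨(HH.filter (fun y => y < x3)).card + 1, hb3'⟩ : Fin (k+2)) = d :=
    Fin.ext (show (HH.filter (fun y => y < x3)).card + 1 = (d:ℕ) by rw [hc3]; omega)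
  have hx2b : (⟨(HH.filter (fun y => y < x2)).card, hb2⟩ : Fin (k+2)) = b :=
    Fin.ext (show (HH.filter (fun y => y < x2)).card = (b:ℕ) by rw [hc2])
  rw [hx2c, hx1a] at fp12
  rw [hx3d, hx2b] at fp23
  rw [hx3d, hx1a] at fp13
  have hv12ne : v1 ≠ v2 := fun h => absurd (huniqπ x1 x2 v1 hv1 (h ▸ hv2)) (Fin.ne_of_lt hx12)
  have hv23ne : v2 ≠ v3 := fun h => absurd (huniqπ x2 x3 v2 hv2 (h ▸ hv3)) (Fin.ne_of_lt hx23)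
  rcases hpat with ⟨h1, h2, h3⟩ | ⟨h1, h2, h3⟩
  · -- 2413 : p c < p a < p d < p b
    have hv12 : v1 < v2 := fp12.mpr h1
    have hv23 : v2 < v3 := fp23.mpr h3
    have hv13 : v1 < v3 := hv12.trans hv23
    exact absurd (fp13.mp hv13) (asymm h2)
  · -- 3142 : p b < p d < p a < p c
    have hv13 : v1 < v3 := fp13.mpr h2
    have hnv12 : ¬ v1 < v2 := fun h => absurd (fp12.mp h) (asymm h3)
    have hnv23 : ¬ v2 < v3 := fun h => absurd (fp23.mp h) (asymm h1)
    have hv21 : v2 < v1 := by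
      rcases hv12ne.lt_or_gt with h | h
      · exact absurd h hnv12
      · exact h
    have hv32 : v3 < v2 := by
      rcases hv23ne.lt_or_gt with h | h
      · exact absurd h hnv23
      · exact h
    exact absurd (hv13.trans hv32) (asymm hv21)

/-- A pattern `p` of length `k+2` is Baxter iff `s_n^H(p) = 1` for every
`n ≥ k` and every `k`-element hole set `H`; equivalently, this holds for
`n = k+3`; equivalently, for some `n ≥ k+3`. -/
theorem baxter_characterization (k : ℕ) (p : Fin (k + 2) → Fin (k + 2))
    (hp : Function.Bijective p) :
    (IsBaxter p ↔
      ∀ n : ℕ, k ≤ n → ∀ H : Finset (Fin n), H.card = k → snH H p = 1) ∧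
    (IsBaxter p ↔
      ∀ H : Finset (Fin (k + 3)), H.card = k → snH H p = 1) ∧
    (IsBaxter p ↔
      ∃ n : ℕ, k + 3 ≤ n ∧ ∀ H : Finset (Fin n), H.card = k → snH H p = 1) := by
  have hpin : Function.Injective p := hp.1
  have PA : IsBaxter p → ∀ (n : ℕ) (H : Finset (Fin n)), H.card = k → snH H p = 1 := by
    intro hb n H hH
    rw [snH, Nat.card_eq_one_iff_unique]
    constructor
    · constructor
      rintro ⟨π1, hπ1, hav1⟩ ⟨π2, hπ2, hav2⟩
      apply Subtype.ext
      obtain ⟨h1a, h1b⟩ := hπ1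
      obtain ⟨h2a, h2b⟩ := hπ2
      exact avoider_unique p hpin hH h1a h1b hav1 h2a h2b hav2
    · obtain ⟨π, hπ, hav⟩ := exists_avoider p hpin hb H hH
      exact ⟨⟨π, hπ, hav⟩⟩
  have PB : ¬ IsBaxter p → ∀ n, k + 3 ≤ n →
      ¬ (∀ H : Finset (Fin n), H.card = k → snH H p = 1) := by
    intro hnb n hn hall
    obtain ⟨H, hH, hno⟩ := no_avoider p hpin hnb hn
    have h1 := hall H hH
    rw [snH] at h1
    have hemp : IsEmpty {π : Fin n → Option (Fin (n - H.card)) //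
        IsPPermH H π ∧ PPAvoids π p} := by
      constructor
      rintro ⟨π, ⟨hnone, hEx⟩, hav⟩
      exact hno π hnone hEx hav
    rw [Nat.card_of_isEmpty] at h1
    exact absurd h1 (by norm_num)
  refine ⟨⟨fun hb n _ H hH => PA hb n H hH, fun h => ?_⟩,
    ⟨fun hb H hH => PA hb _ H hH, fun h => ?_⟩,
    ⟨fun hb => ⟨k+3, le_rfl, fun H hH => PA hb _ H hH⟩, fun h => ?_⟩⟩
  · by_contra hnb
    exact PB hnb (k+3) le_rfl (fun H hH => h (k+3) (by omega) H hH)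
  · by_contra hnb
    exact PB hnb (k+3) le_rfl h
  · obtain ⟨n, hn, hall⟩ := h
    by_contra hnb
    exact PB hnb n hn hall
end
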